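/- arXiv:2603.10366 — 5 statements merged into one kernel-verified Lean document; each statement's English description precedes it below -/
import Mathlib

section
/- In the polynomial ring k[x_1, x_2, x_3] over a field k, for any integer a ≥ 1 one has the ideal equality (x_1^2, x_1 x_2, x_2^2, x_3^{a+1}, x_1 x_3^a, x_2 x_3^a) = (x_1, x_2^2, x_3^a) ∩ (x_1^2, x_2, x_3^a) ∩ (x_1, x_2, x_3^{a+1}). -/
open MvPolynomial

private lemma aux_cond (a : ℕ) (d : Fin 3 →₀ ℕ) :
    (∃ s ∈ ({Finsupp.single 0 2, Finsupp.single 0 1 + Finsupp.single 1 1, Finsupp.single 1 2,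
        Finsupp.single 2 (a+1), Finsupp.single 0 1 + Finsupp.single 2 a,
        Finsupp.single 1 1 + Finsupp.single 2 a} : Set (Fin 3 →₀ ℕ)), s ≤ d) ↔
      ((∃ s ∈ ({Finsupp.single 0 1, Finsupp.single 1 2, Finsupp.single 2 a} :
          Set (Fin 3 →₀ ℕ)), s ≤ d) ∧
        (∃ s ∈ ({Finsupp.single 0 2, Finsupp.single 1 1, Finsupp.single 2 a} :
          Set (Fin 3 →₀ ℕ)), s ≤ d)) ∧
        (∃ s ∈ ({Finsupp.single 0 1, Finsupp.single 1 1, Finsupp.single 2 (a+1)} :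
          Set (Fin 3 →₀ ℕ)), s ≤ d) := by
  simp only [Set.mem_insert_iff, Set.mem_singleton_iff, exists_eq_or_imp, exists_eq_left,
    Finsupp.le_def, Finsupp.add_apply, Finsupp.single_apply]
  simp [Fin.forall_fin_succ]
  omega

/-- In `k[x₁,x₂,x₃]`, for `a ≥ 1`:
`(x₁², x₁x₂, x₂², x₃^{a+1}, x₁x₃ᵃ, x₂x₃ᵃ) = (x₁, x₂², x₃ᵃ) ∩ (x₁², x₂, x₃ᵃ) ∩ (x₁, x₂, x₃^{a+1})`. -/
theorem monomial_ideal_intersection_two {k : Type*} [Field k] (a : ℕ) (ha : 1 ≤ a) :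
    Ideal.span {(X 0 : MvPolynomial (Fin 3) k) ^ 2, X 0 * X 1, X 1 ^ 2,
        X 2 ^ (a + 1), X 0 * X 2 ^ a, X 1 * X 2 ^ a} =
      Ideal.span {(X 0 : MvPolynomial (Fin 3) k), X 1 ^ 2, X 2 ^ a} ⊓
        Ideal.span {(X 0 : MvPolynomial (Fin 3) k) ^ 2, X 1, X 2 ^ a} ⊓
          Ideal.span {(X 0 : MvPolynomial (Fin 3) k), X 1, X 2 ^ (a + 1)} := by
  have e0 : ({(X 0 : MvPolynomial (Fin 3) k) ^ 2, X 0 * X 1, X 1 ^ 2,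
        X 2 ^ (a + 1), X 0 * X 2 ^ a, X 1 * X 2 ^ a} : Set (MvPolynomial (Fin 3) k)) =
      (fun s => monomial s (1:k)) '' {Finsupp.single 0 2,
        Finsupp.single 0 1 + Finsupp.single 1 1, Finsupp.single 1 2, Finsupp.single 2 (a+1),
        Finsupp.single 0 1 + Finsupp.single 2 a, Finsupp.single 1 1 + Finsupp.single 2 a} := by
    simp [Set.image_insert_eq, X, monomial_pow, monomial_mul, Finsupp.smul_single,
      Finsupp.single_add, add_comm]
  have e1 : ({(X 0 : MvPolynomial (Fin 3) k), X 1 ^ 2, X 2 ^ a} : Set (MvPolynomial (Fin 3) k)) =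
      (fun s => monomial s (1:k)) ''
        {Finsupp.single 0 1, Finsupp.single 1 2, Finsupp.single 2 a} := by
    simp [Set.image_insert_eq, X, monomial_pow, Finsupp.smul_single]
  have e2 : ({(X 0 : MvPolynomial (Fin 3) k) ^ 2, X 1, X 2 ^ a} : Set (MvPolynomial (Fin 3) k)) =
      (fun s => monomial s (1:k)) ''
        {Finsupp.single 0 2, Finsupp.single 1 1, Finsupp.single 2 a} := by
    simp [Set.image_insert_eq, X, monomial_pow, Finsupp.smul_single]
  have e3 : ({(X 0 : MvPolynomial (Fin 3) k), X 1, X 2 ^ (a+1)} : Set (MvPolynomial (Fin 3) k)) =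
      (fun s => monomial s (1:k)) ''
        {Finsupp.single 0 1, Finsupp.single 1 1, Finsupp.single 2 (a+1)} := by
    simp [Set.image_insert_eq, X, monomial_pow, Finsupp.smul_single]
  rw [e0, e1, e2, e3]
  ext p
  simp only [Submodule.mem_inf, mem_ideal_span_monomial_image]
  constructor
  · intro h
    refine ⟨⟨fun d hd => ((aux_cond a d).1 (h d hd)).1.1,
      fun d hd => ((aux_cond a d).1 (h d hd)).1.2⟩,
      fun d hd => ((aux_cond a d).1 (h d hd)).2⟩
  · rintro ⟨⟨h1, h2⟩, h3⟩ d hd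
    exact (aux_cond a d).2 ⟨⟨h1 d hd, h2 d hd⟩, h3 d hd⟩
end

section
/- In the polynomial ring k[x_1, x_2, x_3] over a field k, for any integer a ≥ 1 one has the ideal equality (x_1^2, x_1 x_2, x_2^2, x_2 x_3^a, x_3^{a+1}) = (x_1, x_2^2, x_3^a) ∩ (x_1^2, x_2, x_3^{a+1}). -/
open MvPolynomial

lemma monomial_span_set_eq {k : Type*} [Field k] (a : ℕ) :
    ({(X 0 : MvPolynomial (Fin 3) k) ^ 2, X 0 * X 1, X 1 ^ 2,
        X 1 * X 2 ^ a, X 2 ^ (a + 1)} : Set (MvPolynomial (Fin 3) k)) =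
      (fun s => monomial s (1 : k)) '' {Finsupp.single 0 2,
        Finsupp.single 0 1 + Finsupp.single 1 1, Finsupp.single 1 2,
        Finsupp.single 1 1 + Finsupp.single 2 a, Finsupp.single 2 (a + 1)} := by
  simp only [Set.image_insert_eq, Set.image_singleton, X_pow_eq_monomial,
    X, monomial_pow, monomial_mul, one_mul, one_pow, Finsupp.smul_single, smul_eq_mul,
    mul_one, Nat.mul_one, mul_comm]

lemma monomial_span_set_eq₁ {k : Type*} [Field k] (a : ℕ) :
    ({(X 0 : MvPolynomial (Fin 3) k), X 1 ^ 2, X 2 ^ a} : Set (MvPolynomial (Fin 3) k)) =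
      (fun s => monomial s (1 : k)) '' {Finsupp.single 0 1,
        Finsupp.single 1 2, Finsupp.single 2 a} := by
  simp only [Set.image_insert_eq, Set.image_singleton, X_pow_eq_monomial,
    X, monomial_pow, one_pow, Finsupp.smul_single, smul_eq_mul, mul_one]

lemma monomial_span_set_eq₂ {k : Type*} [Field k] (a : ℕ) :
    ({(X 0 : MvPolynomial (Fin 3) k) ^ 2, X 1, X 2 ^ (a + 1)} : Set (MvPolynomial (Fin 3) k)) =
      (fun s => monomial s (1 : k)) '' {Finsupp.single 0 2,
        Finsupp.single 1 1, Finsupp.single 2 (a + 1)} := by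
  simp only [Set.image_insert_eq, Set.image_singleton, X_pow_eq_monomial,
    X, monomial_pow, one_pow, Finsupp.smul_single, smul_eq_mul, mul_one]

lemma le_fin3_iff (s m : Fin 3 →₀ ℕ) :
    s ≤ m ↔ s 0 ≤ m 0 ∧ s 1 ≤ m 1 ∧ s 2 ≤ m 2 := by
  rw [Finsupp.le_def]
  constructor
  · exact fun h => ⟨h 0, h 1, h 2⟩
  · rintro ⟨h0, h1, h2⟩ i; fin_cases i <;> assumption

/-- In `k[x₁,x₂,x₃]`, for `a ≥ 1`:
`(x₁², x₁x₂, x₂², x₂x₃ᵃ, x₃^{a+1}) = (x₁, x₂², x₃ᵃ) ∩ (x₁², x₂, x₃^{a+1})`. -/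
theorem monomial_ideal_intersection_three {k : Type*} [Field k] (a : ℕ) (ha : 1 ≤ a) :
    Ideal.span {(X 0 : MvPolynomial (Fin 3) k) ^ 2, X 0 * X 1, X 1 ^ 2,
        X 1 * X 2 ^ a, X 2 ^ (a + 1)} =
      Ideal.span {(X 0 : MvPolynomial (Fin 3) k), X 1 ^ 2, X 2 ^ a} ⊓
        Ideal.span {(X 0 : MvPolynomial (Fin 3) k) ^ 2, X 1, X 2 ^ (a + 1)} := by
  rw [monomial_span_set_eq, monomial_span_set_eq₁, monomial_span_set_eq₂]
  ext f
  simp only [Ideal.mem_inf, mem_ideal_span_monomial_image, ← forall_and]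
  refine forall₂_congr fun m hm => ?_
  simp only [Set.mem_insert_iff, Set.mem_singleton_iff, exists_eq_or_imp, exists_eq_left,
    le_fin3_iff, Finsupp.add_apply, Finsupp.single_apply, Fin.ext_iff]
  norm_num
  omega
end

section
/- Let R = k[x_0,...,x_4], a ≥ 3, and g_1 = x_2^2 - x_1 x_3, g_2 = x_1 x_2 - x_0 x_3, g_3 = x_3^a - x_0^{a-1} x_4, g_4 = x_1^2 - x_0 x_2. Then (g_1, g_2) : g_4 = (x_2, x_3) and also (g_1, g_2) : g_4^2 = (x_2, x_3). -/
open MvPolynomial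

noncomputable def phi23 {k : Type*} [Field k] :
    MvPolynomial (Fin 5) k →ₐ[k] MvPolynomial (Fin 5) k :=
  aeval (fun i => if i = 2 then 0 else if i = 3 then 0 else X i)

lemma sub_phi23_mem {k : Type*} [Field k] (f : MvPolynomial (Fin 5) k) :
    f - phi23 f ∈ Ideal.span {(X 2 : MvPolynomial (Fin 5) k), X 3} := by
  set J := Ideal.span {(X 2 : MvPolynomial (Fin 5) k), X 3} with hJ
  induction f using MvPolynomial.induction_on with
  | C c => simp [phi23]
  | add p q hp hq =>
      have := J.add_mem hp hq
      convert this using 1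
      rw [map_add]; ring
  | mul_X p i hp =>
      have hXi : X i - phi23 (X i) ∈ J := by
        have : phi23 (X i : MvPolynomial (Fin 5) k)
            = if i = 2 then 0 else if i = 3 then 0 else X i := by
          simp [phi23]
        rw [this]
        by_cases h2 : i = 2
        · simp [h2]
          exact Ideal.subset_span (by simp)
        · by_cases h3 : i = 3
          · simp [h2, h3]
            exact Ideal.subset_span (by simp)
          · simp [h2, h3]
      have key : p * X i - phi23 (p * X i)
          = (p - phi23 p) * X i + phi23 p * (X i - phi23 (X i)) := by
        rw [map_mul]; ring
      rw [key]
      exact J.add_mem (J.mul_mem_right _ hp) (J.mul_mem_left _ hXi)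

lemma span23_eq_ker {k : Type*} [Field k] :
    Ideal.span {(X 2 : MvPolynomial (Fin 5) k), X 3}
      = RingHom.ker (phi23 (k := k)).toRingHom := by
  apply le_antisymm
  · rw [Ideal.span_le]
    rintro x hx
    simp only [Set.mem_insert_iff, Set.mem_singleton_iff] at hx
    rcases hx with rfl | rfl <;> simp [RingHom.mem_ker, phi23]
  · intro f hf
    have h0 : phi23 f = 0 := hf
    have hm := sub_phi23_mem (k := k) f
    rwa [h0, sub_zero] at hm

lemma span23_prime {k : Type*} [Field k] :
    (Ideal.span {(X 2 : MvPolynomial (Fin 5) k), X 3}).IsPrime := by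
  rw [span23_eq_ker]
  exact RingHom.ker_isPrime _

/-- For `a ≥ 3` in `k[x₀,...,x₄]` with `g₁ = x₂² - x₁x₃`, `g₂ = x₁x₂ - x₀x₃`,
`g₄ = x₁² - x₀x₂`: `(g₁,g₂) : g₄ = (x₂,x₃)` and `(g₁,g₂) : g₄² = (x₂,x₃)`. -/
theorem colon_g4_identities {k : Type*} [Field k] (a : ℕ) (ha : 3 ≤ a) :
    (Ideal.span {(X 2 : MvPolynomial (Fin 5) k) ^ 2 - X 1 * X 3,
        X 1 * X 2 - X 0 * X 3}).colon (Ideal.span {X 1 ^ 2 - X 0 * X 2} : Ideal (MvPolynomial (Fin 5) k)) =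
      Ideal.span {(X 2 : MvPolynomial (Fin 5) k), X 3} ∧
    (Ideal.span {(X 2 : MvPolynomial (Fin 5) k) ^ 2 - X 1 * X 3,
        X 1 * X 2 - X 0 * X 3}).colon (Ideal.span {(X 1 ^ 2 - X 0 * X 2) ^ 2} : Ideal (MvPolynomial (Fin 5) k)) =
      Ideal.span {(X 2 : MvPolynomial (Fin 5) k), X 3} := by
  set g1 : MvPolynomial (Fin 5) k := X 2 ^ 2 - X 1 * X 3 with hg1
  set g2 : MvPolynomial (Fin 5) k := X 1 * X 2 - X 0 * X 3 with hg2
  set g4 : MvPolynomial (Fin 5) k := X 1 ^ 2 - X 0 * X 2 with hg4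
  set I : Ideal (MvPolynomial (Fin 5) k) := Ideal.span {g1, g2} with hI
  set J : Ideal (MvPolynomial (Fin 5) k) := Ideal.span {X 2, X 3} with hJ
  have hJprime : J.IsPrime := span23_prime
  have hIJ : I ≤ J := by
    rw [hI, Ideal.span_le]
    rintro x hx
    simp only [Set.mem_insert_iff, Set.mem_singleton_iff] at hx
    rcases hx with rfl | rfl
    · have : g1 = X 2 * X 2 - X 3 * X 1 := by rw [hg1]; ring
      rw [this]
      exact J.sub_mem (J.mul_mem_right _ (Ideal.subset_span (by simp)))
        (J.mul_mem_right _ (Ideal.subset_span (by simp)))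
    · have : g2 = X 2 * X 1 - X 3 * X 0 := by rw [hg2]; ring
      rw [this]
      exact J.sub_mem (J.mul_mem_right _ (Ideal.subset_span (by simp)))
        (J.mul_mem_right _ (Ideal.subset_span (by simp)))
  have hg4phi : phi23 g4 = X 1 ^ 2 := by simp [hg4, phi23]
  have hg4J : g4 ∉ J := by
    rw [hJ, span23_eq_ker]
    intro h
    have : phi23 g4 = 0 := h
    rw [hg4phi] at this
    exact pow_ne_zero 2 (X_ne_zero (R := k) 1) this
  have hg4sqJ : g4 ^ 2 ∉ J := fun h => hg4J (hJprime.mem_of_pow_mem 2 h)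
  -- the two products
  have hX2 : X 2 * g4 ∈ I := by
    rw [hI, Ideal.mem_span_pair]
    exact ⟨-X 0, X 1, by rw [hg1, hg2, hg4]; ring⟩
  have hX3 : X 3 * g4 ∈ I := by
    rw [hI, Ideal.mem_span_pair]
    exact ⟨-X 1, X 2, by rw [hg1, hg2, hg4]; ring⟩
  have hJle : ∀ g : MvPolynomial (Fin 5) k, X 2 * g ∈ I → X 3 * g ∈ I →
      J ≤ I.colon (Ideal.span {g} : Ideal (MvPolynomial (Fin 5) k)) := by
    intro g h2 h3
    rw [hJ, Ideal.span_le]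
    rintro x hx
    simp only [Set.mem_insert_iff, Set.mem_singleton_iff] at hx
    rcases hx with rfl | rfl <;> rw [SetLike.mem_coe, Ideal.mem_colon_span_singleton]
    · exact h2
    · exact h3
  have hle : ∀ g : MvPolynomial (Fin 5) k, g ∉ J → I.colon (Ideal.span {g} : Ideal (MvPolynomial (Fin 5) k)) ≤ J := by
    intro g hg f hf
    rw [Ideal.mem_colon_span_singleton] at hf
    have : f * g ∈ J := hIJ hf
    rcases hJprime.mem_or_mem this with h | h
    · exact h
    · exact absurd h hg
  constructor
  · exact le_antisymm (hle _ hg4J) (hJle _ hX2 hX3)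
  · refine le_antisymm (hle _ hg4sqJ) (hJle _ ?_ ?_)
    · have : X 2 * g4 ^ 2 = (X 2 * g4) * g4 := by ring
      rw [this]; exact I.mul_mem_right _ hX2
    · have : X 3 * g4 ^ 2 = (X 3 * g4) * g4 := by ring
      rw [this]; exact I.mul_mem_right _ hX3
end

section
/- Let R = k[x_0,...,x_4], a ≥ 3, and g_1 = x_2^2 - x_1 x_3, g_2 = x_1 x_2 - x_0 x_3, g_3 = x_3^a - x_0^{a-1} x_4, g_4 = x_1^2 - x_0 x_2. Then g_1, g_2, g_3, g_4 form a d-sequence in R: for all 0 ≤ i ≤ 3 and all k ≥ i+1, ((g_1,...,g_i) : g_{i+1} g_k) = ((g_1,...,g_i) : g_k). -/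
open MvPolynomial

namespace DSeqAux

open Finsupp

variable {k : Type*} [Field k]

lemma primeX (i : Fin 5) : Prime (X i : MvPolynomial (Fin 5) k) := by
  have h := MulEquiv.prime_iff ((renameEquiv k (Equiv.swap i 0)).trans (finSuccEquiv k 4)).toMulEquiv
    (p := (X i : MvPolynomial (Fin 5) k))
  rw [← h]
  simpa [Equiv.swap_apply_left, finSuccEquiv_X_zero] using
    (Polynomial.prime_X : Prime (Polynomial.X : Polynomial (MvPolynomial (Fin 4) k)))


noncomputable def pr : MvPolynomial (Fin 5) k →ₐ[k] MvPolynomial (Fin 5) k :=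
  aeval ![X 0, X 1, 0, 0, X 4]

lemma prX : ∀ i : Fin 5, pr (X i : MvPolynomial (Fin 5) k) = ![X 0, X 1, 0, 0, X 4] i := by
  intro i; simp [pr]

lemma hXi : ∀ i : Fin 5, X i - pr (X i) ∈ Ideal.span {(X 2 : MvPolynomial (Fin 5) k), X 3} := by
  intro i
  fin_cases i <;> rw [prX] <;> simp <;>
    exact Ideal.subset_span (by simp)

lemma sub_pr_mem (p : MvPolynomial (Fin 5) k) :
    p - pr p ∈ Ideal.span {(X 2 : MvPolynomial (Fin 5) k), X 3} := by
  induction p using MvPolynomial.induction_on with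
  | C a => simp [pr]
  | add p q hp hq =>
      have : p + q - pr (p + q) = (p - pr p) + (q - pr q) := by rw [map_add]; ring
      rw [this]; exact Ideal.add_mem _ hp hq
  | mul_X p i hp =>
      have : p * X i - pr (p * X i) = (p - pr p) * X i + pr p * (X i - pr (X i)) := by
        rw [map_mul]; ring
      rw [this]
      exact Ideal.add_mem _ (Ideal.mul_mem_right _ _ hp) (Ideal.mul_mem_left _ _ (hXi i))


lemma mem_X23_of_pr_eq_zero {p : MvPolynomial (Fin 5) k} (h : pr p = 0) :
    p ∈ Ideal.span {(X 2 : MvPolynomial (Fin 5) k), X 3} := by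
  have := sub_pr_mem (k := k) p
  rwa [h, sub_zero] at this


noncomputable abbrev J1 : Ideal (MvPolynomial (Fin 5) k) := Ideal.span {X 2 ^ 2 - X 1 * X 3}

lemma Xm (i : Fin 5) : (X i : MvPolynomial (Fin 5) k) = monomial (single i 1) 1 := by
  rw [← X_pow_eq_monomial, pow_one]

lemma g0m : (X 2 ^ 2 - X 1 * X 3 : MvPolynomial (Fin 5) k)
    = monomial (single 2 2) 1 - monomial (single 1 1 + single 3 1) 1 := by
  rw [X_pow_eq_monomial, Xm, Xm, monomial_mul, one_mul]

lemma rule_mem {J : Ideal (MvPolynomial (Fin 5) k)} {u v : Fin 5 →₀ ℕ}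
    (h : monomial u (1:k) - monomial v 1 ∈ J) (c : Fin 5 →₀ ℕ) :
    monomial (c + u) (1:k) - monomial (c + v) 1 ∈ J := by
  have := J.mul_mem_left (monomial c 1) h
  simpa [mul_sub, monomial_mul] using this

lemma supp_mono {d e : Fin 5 →₀ ℕ} (he : e ∈ (monomial d (1:k)).support) : e = d := by
  classical
  rw [support_monomial, if_neg one_ne_zero] at he
  simpa using he

lemma red1_mono : ∀ n (d : Fin 5 →₀ ℕ), d 2 ≤ n →
    ∃ q : MvPolynomial (Fin 5) k, (∀ e ∈ q.support, e 2 ≤ 1) ∧ monomial d 1 - q ∈ J1 := by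
  intro n
  induction n with
  | zero =>
      intro d hd
      exact ⟨monomial d 1, fun e he => by rw [supp_mono he]; omega, by simp⟩
  | succ n ih =>
      intro d hd
      by_cases h1 : d 2 ≤ 1
      · exact ⟨monomial d 1, fun e he => by rw [supp_mono he]; omega, by simp⟩
      · push_neg at h1
        set c : Fin 5 →₀ ℕ := d - single 2 2 with hc
        have hc2 : c 2 = d 2 - 2 := by simp [hc]
        have hcd : c + single 2 2 = d := by
          ext i
          rcases eq_or_ne i 2 with rfl | h
          · simp only [Finsupp.add_apply, hc2, single_eq_same]; omega
          · have h0 : (single 2 2 : Fin 5 →₀ ℕ) i = 0 := single_eq_of_ne' (fun hh => h hh.symm)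
            simp [hc, h0]
        set d' : Fin 5 →₀ ℕ := c + (single 1 1 + single 3 1) with hd'
        have hd'2 : d' 2 ≤ n := by
          have : d' 2 = c 2 := by
            simp [hd', Finsupp.add_apply, single_eq_of_ne (show (1:Fin 5) ≠ 2 by decide),
              single_eq_of_ne (show (3:Fin 5) ≠ 2 by decide)]
          omega
        obtain ⟨q, hq, hmem⟩ := ih d' hd'2
        refine ⟨q, hq, ?_⟩
        have step : monomial d (1:k) - monomial d' 1 ∈ J1 := by
          rw [← hcd, hd']
          exact rule_mem (by rw [← g0m]; exact Ideal.subset_span rfl) c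
        have := J1.add_mem step hmem
        simpa using this

noncomputable def psi1 : MvPolynomial (Fin 5) k →ₐ[k] MvPolynomial (Fin 5) k :=
  aeval ![X 0, X 1 ^ 2, X 1 * X 3, X 3 ^ 2, X 4]

noncomputable def e1 (d : Fin 5 →₀ ℕ) : Fin 5 →₀ ℕ :=
  single 0 (d 0) + single 1 (2 * d 1 + d 2) + single 3 (d 2 + 2 * d 3) + single 4 (d 4)

lemma psi1_monomial (d : Fin 5 →₀ ℕ) (c : k) :
    psi1 (monomial d c) = monomial (e1 d) c := by
  rw [psi1, aeval_monomial]
  rw [Finsupp.prod_fintype _ _ (fun i => pow_zero _)]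
  rw [Fin.prod_univ_five]
  simp only [Matrix.cons_val_zero, Matrix.cons_val_one, Matrix.head_cons,
    Matrix.cons_val_two, Matrix.tail_cons, Matrix.cons_val_three, Matrix.cons_val_four]
  have : (X 0 ^ d 0 * (X 1 ^ 2) ^ d 1 * (X 1 * X 3) ^ d 2 * (X 3 ^ 2) ^ d 3 * X 4 ^ d 4 :
      MvPolynomial (Fin 5) k)
      = X 0 ^ d 0 * X 1 ^ (2 * d 1 + d 2) * X 3 ^ (d 2 + 2 * d 3) * X 4 ^ d 4 := by
    rw [← pow_mul, ← pow_mul, mul_pow, pow_add, pow_add]; ring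
  rw [this]
  rw [algebraMap_eq, X_pow_eq_monomial, X_pow_eq_monomial, X_pow_eq_monomial,
    X_pow_eq_monomial, monomial_mul, monomial_mul, monomial_mul, C_mul_monomial]
  simp [e1, mul_one, add_assoc]

lemma coeff_apply_inj (sig : (Fin 5 →₀ ℕ) → (Fin 5 →₀ ℕ))
    (psi : MvPolynomial (Fin 5) k →ₐ[k] MvPolynomial (Fin 5) k)
    (hmono : ∀ d (c : k), psi (monomial d c) = monomial (sig d) c)
    (P : (Fin 5 →₀ ℕ) → Prop)
    (hsig : ∀ d d', P d → P d' → sig d = sig d' → d = d')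
    {q : MvPolynomial (Fin 5) k} (hq : ∀ e ∈ q.support, P e) (h : psi q = 0) : q = 0 := by
  classical
  by_contra hne
  obtain ⟨d, hd⟩ := Finset.nonempty_iff_ne_empty.2 (fun he => hne (MvPolynomial.support_eq_empty.1 he))
  have hsum : psi q = ∑ e ∈ q.support, monomial (sig e) (coeff e q) := by
    conv_lhs => rw [as_sum q]
    rw [map_sum]
    simp only [hmono]
  have h2 : coeff (sig d) (psi q) = coeff d q := by
    have hone : ∀ e ∈ q.support, e ≠ d →
        coeff (sig d) (monomial (sig e) (coeff e q)) = 0 := fun e he hne' => by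
      rw [coeff_monomial, if_neg (fun hee => hne' (hsig e d (hq e he) (hq d hd) hee))]
    rw [hsum, coeff_sum]
    exact (Finset.sum_eq_single_of_mem d hd hone).trans (by rw [coeff_monomial, if_pos rfl])
  rw [h, coeff_zero] at h2
  exact (MvPolynomial.mem_support_iff.1 hd) h2.symm

lemma e1_apply (d : Fin 5 →₀ ℕ) :
    e1 d 0 = d 0 ∧ e1 d 1 = 2 * d 1 + d 2 ∧ e1 d 3 = d 2 + 2 * d 3 ∧ e1 d 4 = d 4 := by
  refine ⟨?_, ?_, ?_, ?_⟩ <;>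
    simp [e1, Finsupp.add_apply, Finsupp.single_apply]

lemma e1_inj (d d' : Fin 5 →₀ ℕ) (h2 : d 2 ≤ 1) (h2' : d' 2 ≤ 1) (h : e1 d = e1 d') :
    d = d' := by
  obtain ⟨a0, a1, a3, a4⟩ := e1_apply d
  obtain ⟨b0, b1, b3, b4⟩ := e1_apply d'
  have h0 := DFunLike.congr_fun h 0
  have h1 := DFunLike.congr_fun h 1
  have h3 := DFunLike.congr_fun h 3
  have h4 := DFunLike.congr_fun h 4
  rw [a0, b0] at h0; rw [a1, b1] at h1; rw [a3, b3] at h3; rw [a4, b4] at h4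
  have e0 : d 0 = d' 0 := h0
  have e2 : d 2 = d' 2 := by omega
  have e1' : d 1 = d' 1 := by omega
  have e3 : d 3 = d' 3 := by omega
  have e4 : d 4 = d' 4 := h4
  ext i
  fin_cases i <;> first | exact e0 | exact e1' | exact e2 | exact e3 | exact e4

lemma red1 (p : MvPolynomial (Fin 5) k) :
    ∃ q, (∀ e ∈ q.support, e 2 ≤ 1) ∧ p - q ∈ (J1 : Ideal (MvPolynomial (Fin 5) k)) := by
  induction p using MvPolynomial.induction_on' with
  | monomial d c =>
      obtain ⟨q0, hq0, hm⟩ := red1_mono (k := k) (d 2) d le_rfl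
      refine ⟨c • q0, ?_, ?_⟩
      · intro e he
        exact hq0 e (MvPolynomial.support_smul he)
      · have : monomial d c - c • q0 = c • (monomial d 1 - q0) := by
          rw [smul_sub]
          congr 1
          rw [smul_monomial, smul_eq_mul, mul_one]
        rw [this]
        rw [smul_eq_C_mul]
        exact Ideal.mul_mem_left _ (C c) hm
  | add p q hp hq =>
      obtain ⟨qp, hqp, hmp⟩ := hp
      obtain ⟨qq, hqq, hmq⟩ := hq
      refine ⟨qp + qq, ?_, ?_⟩
      · intro e he
        rcases Finset.mem_union.1 (MvPolynomial.support_add he) with h | h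
        · exact hqp e h
        · exact hqq e h
      · have : p + q - (qp + qq) = (p - qp) + (q - qq) := by ring
        rw [this]
        exact Ideal.add_mem _ hmp hmq

lemma psi1_g0 : psi1 (X 2 ^ 2 - X 1 * X 3 : MvPolynomial (Fin 5) k) = 0 := by
  simp [psi1]
  ring

lemma mem_J1_of_psi1 {p : MvPolynomial (Fin 5) k} (h : psi1 p = 0) :
    p ∈ (J1 : Ideal (MvPolynomial (Fin 5) k)) := by
  obtain ⟨q, hq, hm⟩ := red1 p
  have hker : psi1 (p - q) = 0 := by
    obtain ⟨c, hc⟩ := Ideal.mem_span_singleton'.1 hm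
    rw [← hc, map_mul, psi1_g0, mul_zero]
  have hq0 : psi1 q = 0 := by
    have : q = p - (p - q) := by ring
    rw [this, map_sub, h, hker, sub_zero]
  have : q = 0 := coeff_apply_inj e1 psi1 psi1_monomial (fun d => d 2 ≤ 1) e1_inj hq hq0
  rw [this, sub_zero] at hm
  exact hm


noncomputable abbrev J2 : Ideal (MvPolynomial (Fin 5) k) :=
  Ideal.span {X 2 ^ 2 - X 1 * X 3, X 1 * X 2 - X 0 * X 3, X 1 ^ 2 - X 0 * X 2}

noncomputable def psi2 : MvPolynomial (Fin 5) k →ₐ[k] MvPolynomial (Fin 5) k :=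
  aeval ![X 1 ^ 3, X 1 ^ 2 * X 3, X 1 * X 3 ^ 2, X 3 ^ 3, X 4]

noncomputable def e2 (d : Fin 5 →₀ ℕ) : Fin 5 →₀ ℕ :=
  single 1 (3 * d 0 + 2 * d 1 + d 2) + single 3 (d 1 + 2 * d 2 + 3 * d 3) + single 4 (d 4)

lemma psi2_monomial (d : Fin 5 →₀ ℕ) (c : k) :
    psi2 (monomial d c) = monomial (e2 d) c := by
  rw [psi2, aeval_monomial]
  rw [Finsupp.prod_fintype _ _ (fun i => pow_zero _)]
  rw [Fin.prod_univ_five]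
  simp only [Matrix.cons_val_zero, Matrix.cons_val_one, Matrix.head_cons,
    Matrix.cons_val_two, Matrix.tail_cons, Matrix.cons_val_three, Matrix.cons_val_four]
  have : ((X 1 ^ 3) ^ d 0 * (X 1 ^ 2 * X 3) ^ d 1 * (X 1 * X 3 ^ 2) ^ d 2 * (X 3 ^ 3) ^ d 3
      * X 4 ^ d 4 : MvPolynomial (Fin 5) k)
      = X 1 ^ (3 * d 0 + 2 * d 1 + d 2) * X 3 ^ (d 1 + 2 * d 2 + 3 * d 3) * X 4 ^ d 4 := by
    rw [← pow_mul, ← pow_mul, mul_pow, mul_pow, ← pow_mul, ← pow_mul]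
    rw [pow_add, pow_add, pow_add, pow_add]; ring
  rw [this]
  rw [algebraMap_eq, X_pow_eq_monomial, X_pow_eq_monomial, X_pow_eq_monomial,
    monomial_mul, monomial_mul, C_mul_monomial]
  simp [e2, mul_one]

lemma e2_apply (d : Fin 5 →₀ ℕ) :
    e2 d 1 = 3 * d 0 + 2 * d 1 + d 2 ∧ e2 d 3 = d 1 + 2 * d 2 + 3 * d 3 ∧ e2 d 4 = d 4 := by
  refine ⟨?_, ?_, ?_⟩ <;> simp [e2, Finsupp.add_apply, Finsupp.single_apply]

lemma e2_inj (d d' : Fin 5 →₀ ℕ) (hn : d 1 + d 2 ≤ 1) (hn' : d' 1 + d' 2 ≤ 1)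
    (h : e2 d = e2 d') : d = d' := by
  obtain ⟨a1, a3, a4⟩ := e2_apply d
  obtain ⟨b1, b3, b4⟩ := e2_apply d'
  have h1 := DFunLike.congr_fun h 1
  have h3 := DFunLike.congr_fun h 3
  have h4 := DFunLike.congr_fun h 4
  rw [a1, b1] at h1; rw [a3, b3] at h3; rw [a4, b4] at h4
  have e0 : d 0 = d' 0 := by omega
  have e1' : d 1 = d' 1 := by omega
  have e2' : d 2 = d' 2 := by omega
  have e3 : d 3 = d' 3 := by omega
  have e4 : d 4 = d' 4 := h4
  ext i
  fin_cases i <;> first | exact e0 | exact e1' | exact e2' | exact e3 | exact e4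

lemma Xm' (i : Fin 5) : (X i : MvPolynomial (Fin 5) k) = monomial (single i 1) 1 := by
  rw [← X_pow_eq_monomial, pow_one]

lemma g0m' : (X 2 ^ 2 - X 1 * X 3 : MvPolynomial (Fin 5) k)
    = monomial (single 2 2) 1 - monomial (single 1 1 + single 3 1) 1 := by
  rw [X_pow_eq_monomial, Xm', Xm', monomial_mul, one_mul]

lemma g1m' : (X 1 * X 2 - X 0 * X 3 : MvPolynomial (Fin 5) k)
    = monomial (single 1 1 + single 2 1) 1 - monomial (single 0 1 + single 3 1) 1 := by
  rw [Xm', Xm', Xm', Xm', monomial_mul, monomial_mul, one_mul]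

lemma g4m' : (X 1 ^ 2 - X 0 * X 2 : MvPolynomial (Fin 5) k)
    = monomial (single 1 2) 1 - monomial (single 0 1 + single 2 1) 1 := by
  rw [X_pow_eq_monomial, Xm', Xm', monomial_mul, one_mul]

lemma rule_mem' {J : Ideal (MvPolynomial (Fin 5) k)} {u v : Fin 5 →₀ ℕ}
    (h : monomial u (1:k) - monomial v 1 ∈ J) (c : Fin 5 →₀ ℕ) :
    monomial (c + u) (1:k) - monomial (c + v) 1 ∈ J := by
  have := J.mul_mem_left (monomial c 1) h
  simpa [mul_sub, monomial_mul] using this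

lemma supp_mono' {d e : Fin 5 →₀ ℕ} (he : e ∈ (monomial d (1:k)).support) : e = d := by
  classical
  rw [support_monomial, if_neg one_ne_zero] at he
  simpa using he

lemma sub_single_add {d : Fin 5 →₀ ℕ} {u : Fin 5 →₀ ℕ} (h : ∀ i, u i ≤ d i) :
    (d - u) + u = d := by
  ext i
  simp only [Finsupp.add_apply, Finsupp.tsub_apply]
  have := h i
  omega

lemma red2_mono : ∀ n (d : Fin 5 →₀ ℕ), d 1 + d 2 ≤ n →
    ∃ q : MvPolynomial (Fin 5) k, (∀ e ∈ q.support, e 1 + e 2 ≤ 1) ∧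
      monomial d 1 - q ∈ (J2 : Ideal (MvPolynomial (Fin 5) k)) := by
  intro n
  induction n with
  | zero =>
      intro d hd
      exact ⟨monomial d 1, fun e he => by rw [supp_mono' he]; omega, by simp⟩
  | succ n ih =>
      intro d hd
      by_cases h1 : d 1 + d 2 ≤ 1
      · exact ⟨monomial d 1, fun e he => by rw [supp_mono' he]; omega, by simp⟩
      push_neg at h1
      -- helper to finish given a rule
      have finish : ∀ (u v : Fin 5 →₀ ℕ), (∀ i, u i ≤ d i) →
          (monomial u (1:k) - monomial v 1 ∈ (J2 : Ideal (MvPolynomial (Fin 5) k))) →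
          (((d - u) + v) 1 + ((d - u) + v) 2 ≤ n) →
          ∃ q : MvPolynomial (Fin 5) k, (∀ e ∈ q.support, e 1 + e 2 ≤ 1) ∧
            monomial d 1 - q ∈ (J2 : Ideal (MvPolynomial (Fin 5) k)) := by
        intro u v hu hrule hmeas
        obtain ⟨q, hq, hmem⟩ := ih _ hmeas
        refine ⟨q, hq, ?_⟩
        have step := rule_mem' hrule (d - u)
        rw [sub_single_add hu] at step
        have := Ideal.add_mem _ step hmem
        simpa using this
      by_cases h2 : 2 ≤ d 2
      · -- rule g0 : x2^2 -> x1 x3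
        refine finish (single 2 2) (single 1 1 + single 3 1) ?_ ?_ ?_
        · intro i
          rcases eq_or_ne i 2 with rfl | h
          · simpa using h2
          · simp [Finsupp.single_eq_of_ne' (Ne.symm h)]
        · rw [← g0m']
          exact Ideal.subset_span (by simp)
        · simp [Finsupp.add_apply, Finsupp.tsub_apply, Finsupp.single_apply]
          omega
      by_cases h3 : 2 ≤ d 1
      · -- rule g4 : x1^2 -> x0 x2
        refine finish (single 1 2) (single 0 1 + single 2 1) ?_ ?_ ?_
        · intro i
          rcases eq_or_ne i 1 with rfl | h
          · simpa using h3
          · simp [Finsupp.single_eq_of_ne' (Ne.symm h)]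
        · rw [← g4m']
          exact Ideal.subset_span (by simp)
        · simp [Finsupp.add_apply, Finsupp.tsub_apply, Finsupp.single_apply]
          omega
      · -- d1 = 1, d2 = 1 : rule g1 : x1 x2 -> x0 x3
        refine finish (single 1 1 + single 2 1) (single 0 1 + single 3 1) ?_ ?_ ?_
        · intro i
          rcases eq_or_ne i 1 with rfl | h
          · simp [Finsupp.single_apply]; omega
          rcases eq_or_ne i 2 with rfl | h'
          · simp [Finsupp.single_apply]; omega
          · simp [Finsupp.single_eq_of_ne' (Ne.symm h), Finsupp.single_eq_of_ne' (Ne.symm h')]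
        · rw [← g1m']
          exact Ideal.subset_span (by simp)
        · simp [Finsupp.add_apply, Finsupp.tsub_apply, Finsupp.single_apply]
          omega
lemma red2 (p : MvPolynomial (Fin 5) k) :
    ∃ q, (∀ e ∈ q.support, e 1 + e 2 ≤ 1) ∧ p - q ∈ (J2 : Ideal (MvPolynomial (Fin 5) k)) := by
  induction p using MvPolynomial.induction_on' with
  | monomial d c =>
      obtain ⟨q0, hq0, hm⟩ := red2_mono (k := k) (d 1 + d 2) d le_rfl
      refine ⟨c • q0, ?_, ?_⟩
      · intro e he
        exact hq0 e (MvPolynomial.support_smul he)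
      · have : monomial d c - c • q0 = c • (monomial d 1 - q0) := by
          rw [smul_sub]
          congr 1
          rw [smul_monomial, smul_eq_mul, mul_one]
        rw [this]
        rw [smul_eq_C_mul]
        exact Ideal.mul_mem_left _ (C c) hm
  | add p q hp hq =>
      obtain ⟨qp, hqp, hmp⟩ := hp
      obtain ⟨qq, hqq, hmq⟩ := hq
      refine ⟨qp + qq, ?_, ?_⟩
      · intro e he
        rcases Finset.mem_union.1 (MvPolynomial.support_add he) with h | h
        · exact hqp e h
        · exact hqq e h
      · have : p + q - (qp + qq) = (p - qp) + (q - qq) := by ring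
        rw [this]
        exact Ideal.add_mem _ hmp hmq

lemma J2_le_ker : (J2 : Ideal (MvPolynomial (Fin 5) k)) ≤
    RingHom.ker (psi2 : MvPolynomial (Fin 5) k →ₐ[k] MvPolynomial (Fin 5) k).toRingHom := by
  rw [Ideal.span_le]
  rintro x (rfl | rfl | rfl) <;>
    · simp only [SetLike.mem_coe, RingHom.mem_ker, AlgHom.toRingHom_eq_coe, RingHom.coe_coe]
      simp [psi2]
      ring

lemma mem_J2_of_psi2 {p : MvPolynomial (Fin 5) k} (h : psi2 p = 0) :
    p ∈ (J2 : Ideal (MvPolynomial (Fin 5) k)) := by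
  obtain ⟨q, hq, hm⟩ := red2 p
  have hker : psi2 (p - q) = 0 := J2_le_ker hm
  have hq0 : psi2 q = 0 := by
    have : q = p - (p - q) := by ring
    rw [this, map_sub, h, hker, sub_zero]
  have : q = 0 := coeff_apply_inj e2 psi2 psi2_monomial (fun d => d 1 + d 2 ≤ 1) e2_inj hq hq0
  rw [this, sub_zero] at hm
  exact hm



lemma mono_sub_ne (i : Fin 5) {u v : Fin 5 →₀ ℕ} (h : u i ≠ v i) :
    monomial u (1:k) - monomial v 1 ≠ 0 := by
  intro h0
  rcases (monomial_eq_monomial_iff _ _ _ _).1 (sub_eq_zero.1 h0) with ⟨rfl, -⟩ | ⟨h1, -⟩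
  · exact h rfl
  · exact one_ne_zero h1

lemma X_not_dvd_X {i j : Fin 5} (h : i ≠ j) : ¬ (X i : MvPolynomial (Fin 5) k) ∣ X j := by
  rintro ⟨w, hw⟩
  have h2 := congrArg (aeval (fun l : Fin 5 => if l = i then 0 else (X l : MvPolynomial (Fin 5) k))) hw
  rw [map_mul, aeval_X, aeval_X, if_pos rfl, if_neg (Ne.symm h), zero_mul] at h2
  exact X_ne_zero j h2

-- nonzero lemmas
lemma hG0ne : (X 2 ^ 2 - X 1 * X 3 : MvPolynomial (Fin 5) k) ≠ 0 := by
  simp only [Xm', X_pow_eq_monomial, monomial_pow, one_pow, Finsupp.smul_single, smul_eq_mul, mul_one, one_mul, monomial_mul]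
  apply mono_sub_ne 1
  simp [Finsupp.single_apply]

lemma hG1ne : (X 1 * X 2 - X 0 * X 3 : MvPolynomial (Fin 5) k) ≠ 0 := by
  simp only [Xm', X_pow_eq_monomial, monomial_pow, one_pow, Finsupp.smul_single, smul_eq_mul, mul_one, one_mul, monomial_mul]
  apply mono_sub_ne 0
  simp [Finsupp.single_apply]

lemma hG2ne (a : ℕ) : (X 3 ^ a - X 0 ^ (a-1) * X 4 : MvPolynomial (Fin 5) k) ≠ 0 := by
  simp only [Xm', X_pow_eq_monomial, monomial_pow, one_pow, Finsupp.smul_single, smul_eq_mul, mul_one, one_mul, monomial_mul]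
  apply mono_sub_ne 4
  simp [Finsupp.single_apply]

lemma hG3ne : (X 1 ^ 2 - X 0 * X 2 : MvPolynomial (Fin 5) k) ≠ 0 := by
  simp only [Xm', X_pow_eq_monomial, monomial_pow, one_pow, Finsupp.smul_single, smul_eq_mul, mul_one, one_mul, monomial_mul]
  apply mono_sub_ne 0
  simp [Finsupp.single_apply]

-- pr values
lemma prG0 : pr (X 2 ^ 2 - X 1 * X 3 : MvPolynomial (Fin 5) k) = 0 := by simp [pr]
lemma prG1 : pr (X 1 * X 2 - X 0 * X 3 : MvPolynomial (Fin 5) k) = 0 := by simp [pr]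
lemma prG2 (a : ℕ) (ha : 3 ≤ a) : pr (X 3 ^ a - X 0 ^ (a-1) * X 4 : MvPolynomial (Fin 5) k)
    = -(X 0 ^ (a-1) * X 4) := by
  simp [pr, zero_pow (by omega : a ≠ 0)]
lemma prG3 : pr (X 1 ^ 2 - X 0 * X 2 : MvPolynomial (Fin 5) k) = X 1 ^ 2 := by simp [pr]

lemma prG2ne (a : ℕ) (ha : 3 ≤ a) :
    pr (X 3 ^ a - X 0 ^ (a-1) * X 4 : MvPolynomial (Fin 5) k) ≠ 0 := by
  rw [prG2 a ha]
  exact neg_ne_zero.2 (mul_ne_zero (pow_ne_zero _ (X_ne_zero _)) (X_ne_zero _))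

lemma prG3ne : pr (X 1 ^ 2 - X 0 * X 2 : MvPolynomial (Fin 5) k) ≠ 0 := by
  rw [prG3]
  exact pow_ne_zero _ (X_ne_zero _)

-- psi1 values
lemma psi1G0 : psi1 (X 2 ^ 2 - X 1 * X 3 : MvPolynomial (Fin 5) k) = 0 := by
  simp [psi1]; ring

lemma psi1G1ne : psi1 (X 1 * X 2 - X 0 * X 3 : MvPolynomial (Fin 5) k) ≠ 0 := by
  have h : psi1 (X 1 * X 2 - X 0 * X 3 : MvPolynomial (Fin 5) k)
      = X 1 ^ 3 * X 3 - X 0 * X 3 ^ 2 := by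
    simp [psi1]; ring
  rw [h]
  simp only [Xm', X_pow_eq_monomial, monomial_pow, one_pow, Finsupp.smul_single, smul_eq_mul, mul_one, one_mul, monomial_mul]
  apply mono_sub_ne 0
  simp [Finsupp.single_apply]

lemma psi1G2ne (a : ℕ) (ha : 3 ≤ a) :
    psi1 (X 3 ^ a - X 0 ^ (a-1) * X 4 : MvPolynomial (Fin 5) k) ≠ 0 := by
  have h : psi1 (X 3 ^ a - X 0 ^ (a-1) * X 4 : MvPolynomial (Fin 5) k)
      = X 3 ^ (2*a) - X 0 ^ (a-1) * X 4 := by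
    simp [psi1, ← pow_mul, mul_comm]
  rw [h]
  simp only [Xm', X_pow_eq_monomial, monomial_pow, one_pow, Finsupp.smul_single, smul_eq_mul, mul_one, one_mul, monomial_mul]
  apply mono_sub_ne 4
  simp [Finsupp.single_apply]

lemma psi1G3ne : psi1 (X 1 ^ 2 - X 0 * X 2 : MvPolynomial (Fin 5) k) ≠ 0 := by
  have h : psi1 (X 1 ^ 2 - X 0 * X 2 : MvPolynomial (Fin 5) k)
      = X 1 ^ 4 - X 0 * (X 1 * X 3) := by
    simp [psi1]; ring
  rw [h]
  simp only [Xm', X_pow_eq_monomial, monomial_pow, one_pow, Finsupp.smul_single, smul_eq_mul, mul_one, one_mul, monomial_mul]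
  apply mono_sub_ne 0
  simp [Finsupp.single_apply]

-- psi2 values
lemma psi2G0 : psi2 (X 2 ^ 2 - X 1 * X 3 : MvPolynomial (Fin 5) k) = 0 := by
  simp [psi2]; ring
lemma psi2G1 : psi2 (X 1 * X 2 - X 0 * X 3 : MvPolynomial (Fin 5) k) = 0 := by
  simp [psi2]; ring

lemma psi2G2ne (a : ℕ) (ha : 3 ≤ a) :
    psi2 (X 3 ^ a - X 0 ^ (a-1) * X 4 : MvPolynomial (Fin 5) k) ≠ 0 := by
  have h : psi2 (X 3 ^ a - X 0 ^ (a-1) * X 4 : MvPolynomial (Fin 5) k)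
      = X 3 ^ (3*a) - X 1 ^ (3*(a-1)) * X 4 := by
    simp [psi2, ← pow_mul, mul_comm]
  rw [h]
  simp only [Xm', X_pow_eq_monomial, monomial_pow, one_pow, Finsupp.smul_single, smul_eq_mul, mul_one, one_mul, monomial_mul]
  apply mono_sub_ne 4
  simp [Finsupp.single_apply]

-- ring identities and memberships

lemma memA : ((X 2 : MvPolynomial (Fin 5) k) * (X 1 ^ 2 - X 0 * X 2)) ∈
    Ideal.span {(X 2 ^ 2 - X 1 * X 3 : MvPolynomial (Fin 5) k), X 1 * X 2 - X 0 * X 3} := by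
  rw [show (X 2 : MvPolynomial (Fin 5) k) * (X 1 ^ 2 - X 0 * X 2)
      = X 1 * (X 1 * X 2 - X 0 * X 3) + (- X 0) * (X 2 ^ 2 - X 1 * X 3) from by ring]
  exact Ideal.add_mem _ (Ideal.mul_mem_left _ _ (Ideal.subset_span (by simp)))
    (Ideal.mul_mem_left _ _ (Ideal.subset_span (by simp)))

lemma memB : ((X 3 : MvPolynomial (Fin 5) k) * (X 1 ^ 2 - X 0 * X 2)) ∈
    Ideal.span {(X 2 ^ 2 - X 1 * X 3 : MvPolynomial (Fin 5) k), X 1 * X 2 - X 0 * X 3} := by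
  rw [show (X 3 : MvPolynomial (Fin 5) k) * (X 1 ^ 2 - X 0 * X 2)
      = X 2 * (X 1 * X 2 - X 0 * X 3) + (- X 1) * (X 2 ^ 2 - X 1 * X 3) from by ring]
  exact Ideal.add_mem _ (Ideal.mul_mem_left _ _ (Ideal.subset_span (by simp)))
    (Ideal.mul_mem_left _ _ (Ideal.subset_span (by simp)))

lemma memX23_mul {x : MvPolynomial (Fin 5) k}
    (hx : x ∈ Ideal.span {(X 2 : MvPolynomial (Fin 5) k), X 3}) :
    x * (X 1 ^ 2 - X 0 * X 2) ∈
      Ideal.span {(X 2 ^ 2 - X 1 * X 3 : MvPolynomial (Fin 5) k), X 1 * X 2 - X 0 * X 3} := by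
  obtain ⟨A, B, hAB⟩ := Ideal.mem_span_pair.1 hx
  rw [← hAB, show (A * X 2 + B * X 3) * (X 1 ^ 2 - X 0 * X 2)
      = A * (X 2 * (X 1 ^ 2 - X 0 * X 2)) + B * (X 3 * (X 1 ^ 2 - X 0 * X 2)) from by ring]
  exact Ideal.add_mem _ (Ideal.mul_mem_left _ _ memA) (Ideal.mul_mem_left _ _ memB)

lemma spanG01_le :
    Ideal.span {(X 2 ^ 2 - X 1 * X 3 : MvPolynomial (Fin 5) k), X 1 * X 2 - X 0 * X 3} ≤
      Ideal.span {(X 2 : MvPolynomial (Fin 5) k), X 3} := by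
  rw [Ideal.span_le]
  rintro x (rfl | rfl)
  · exact Ideal.mem_span_pair.2 ⟨X 2, - X 1, by ring⟩
  · exact Ideal.mem_span_pair.2 ⟨X 1, - X 0, by ring⟩

lemma pr2 : pr (X 2 : MvPolynomial (Fin 5) k) = 0 := by simp [pr]
lemma pr3 : pr (X 3 : MvPolynomial (Fin 5) k) = 0 := by simp [pr]

lemma pr_kill {x : MvPolynomial (Fin 5) k}
    (hx : x ∈ Ideal.span {(X 2 : MvPolynomial (Fin 5) k), X 3}) : pr x = 0 := by
  obtain ⟨A, B, hAB⟩ := Ideal.mem_span_pair.1 hx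
  rw [← hAB, map_add, map_mul, map_mul, pr2, pr3, mul_zero, mul_zero, add_zero]

lemma inter_mem {h : MvPolynomial (Fin 5) k}
    (h23 : h ∈ Ideal.span {(X 2 : MvPolynomial (Fin 5) k), X 3})
    (hJ : h ∈ (J2 : Ideal (MvPolynomial (Fin 5) k))) :
    h ∈ Ideal.span {(X 2 ^ 2 - X 1 * X 3 : MvPolynomial (Fin 5) k), X 1 * X 2 - X 0 * X 3} := by
  have hset : ({X 2 ^ 2 - X 1 * X 3, X 1 * X 2 - X 0 * X 3, X 1 ^ 2 - X 0 * X 2} :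
      Set (MvPolynomial (Fin 5) k))
      = insert (X 1 ^ 2 - X 0 * X 2) {X 2 ^ 2 - X 1 * X 3, X 1 * X 2 - X 0 * X 3} := by
    ext x; simp; tauto
  have hJ2 : h ∈ Ideal.span (insert (X 1 ^ 2 - X 0 * X 2)
      {(X 2 ^ 2 - X 1 * X 3 : MvPolynomial (Fin 5) k), X 1 * X 2 - X 0 * X 3}) := by
    rw [← hset]; exact hJ
  obtain ⟨u, z, hz, hEq⟩ := Ideal.mem_span_insert.1 hJ2
  have hz23 : z ∈ Ideal.span {(X 2 : MvPolynomial (Fin 5) k), X 3} := spanG01_le hz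
  have hu : u * (X 1 ^ 2 - X 0 * X 2) ∈ Ideal.span {(X 2 : MvPolynomial (Fin 5) k), X 3} := by
    have heq2 : u * (X 1 ^ 2 - X 0 * X 2) = h - z := by rw [hEq]; ring
    rw [heq2]; exact Submodule.sub_mem _ h23 hz23
  have hpru : pr u = 0 := by
    have h0 := pr_kill hu
    rw [map_mul, prG3] at h0
    rcases mul_eq_zero.1 h0 with h' | h'
    · exact h'
    · exact absurd h' (pow_ne_zero _ (X_ne_zero _))
  have hm := memX23_mul (mem_X23_of_pr_eq_zero hpru)
  rw [hEq]
  exact Ideal.add_mem _ hm hz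

lemma colon_easy {R : Type*} [CommRing R] (I : Ideal R) (f h : R) :
    I.colon (Ideal.span {h}) ≤ I.colon (Ideal.span {f * h}) := by
  intro r hr
  rw [Ideal.mem_colon_span_singleton] at hr ⊢
  rw [show r * (f * h) = f * (r * h) from by ring]
  exact I.mul_mem_left f hr

lemma hard0 (f h : MvPolynomial (Fin 5) k) (hf : f ≠ 0) :
    (⊥ : Ideal (MvPolynomial (Fin 5) k)).colon (Ideal.span {f * h}) =
    (⊥ : Ideal (MvPolynomial (Fin 5) k)).colon (Ideal.span {h}) := by
  ext r
  rw [Ideal.mem_colon_span_singleton, Ideal.mem_colon_span_singleton, Ideal.mem_bot, Ideal.mem_bot]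
  constructor
  · intro h0
    have h1 : f * (r * h) = 0 := by rw [show f * (r * h) = r * (f * h) from by ring, h0]
    rcases mul_eq_zero.1 h1 with h' | h'
    · exact absurd h' hf
    · exact h'
  · intro h0
    rw [show r * (f * h) = f * (r * h) from by ring, h0, mul_zero]

lemma hard1 (f : MvPolynomial (Fin 5) k) (hf : psi1 f ≠ 0) :
    (Ideal.span {(X 2 ^ 2 - X 1 * X 3 : MvPolynomial (Fin 5) k)}).colon
        (Ideal.span {(X 1 * X 2 - X 0 * X 3) * f}) ≤
      (Ideal.span {(X 2 ^ 2 - X 1 * X 3 : MvPolynomial (Fin 5) k)}).colon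
        (Ideal.span {f}) := by
  intro r hr
  rw [Ideal.mem_colon_span_singleton] at hr ⊢
  obtain ⟨c, hc⟩ := Ideal.mem_span_singleton'.1 hr
  have h2 := congrArg psi1 hc
  rw [map_mul, psi1G0, mul_zero, map_mul, map_mul] at h2
  have h3 : psi1 r = 0 := by
    rcases mul_eq_zero.1 h2.symm with h' | h'
    · exact h'
    · rcases mul_eq_zero.1 h' with h'' | h''
      · exact absurd h'' psi1G1ne
      · exact absurd h'' hf
  exact Ideal.mul_mem_right f _ (mem_J1_of_psi1 h3)

lemma hard2 (a : ℕ) (ha : 3 ≤ a) :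
    (Ideal.span {(X 2 ^ 2 - X 1 * X 3 : MvPolynomial (Fin 5) k), X 1 * X 2 - X 0 * X 3}).colon
        (Ideal.span {((X 3 ^ a - X 0 ^ (a - 1) * X 4) * (X 3 ^ a - X 0 ^ (a - 1) * X 4) :
            MvPolynomial (Fin 5) k)}) ≤
      (Ideal.span {(X 2 ^ 2 - X 1 * X 3 : MvPolynomial (Fin 5) k), X 1 * X 2 - X 0 * X 3}).colon
        (Ideal.span {(X 3 ^ a - X 0 ^ (a - 1) * X 4 : MvPolynomial (Fin 5) k)}) := by
  intro r hr
  rw [Ideal.mem_colon_span_singleton] at hr ⊢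
  obtain ⟨A, B, hAB⟩ := Ideal.mem_span_pair.1 hr
  have hpr : pr r = 0 := by
    have h2 := congrArg pr hAB
    rw [map_add, map_mul, map_mul, prG0, prG1, mul_zero, mul_zero, add_zero,
      map_mul, map_mul] at h2
    rcases mul_eq_zero.1 h2.symm with h' | h'
    · exact h'
    · rcases mul_eq_zero.1 h' with h'' | h'' <;> exact absurd h'' (prG2ne a ha)
  have hpsi : psi2 r = 0 := by
    have h2 := congrArg psi2 hAB
    rw [map_add, map_mul, map_mul, psi2G0, psi2G1, mul_zero, mul_zero, add_zero,
      map_mul, map_mul] at h2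
    rcases mul_eq_zero.1 h2.symm with h' | h'
    · exact h'
    · rcases mul_eq_zero.1 h' with h'' | h'' <;> exact absurd h'' (psi2G2ne a ha)
  exact Ideal.mul_mem_right _ _
    (inter_mem (mem_X23_of_pr_eq_zero hpr) (mem_J2_of_psi2 hpsi))

lemma hard3 (a : ℕ) (ha : 3 ≤ a) :
    (Ideal.span {(X 2 ^ 2 - X 1 * X 3 : MvPolynomial (Fin 5) k), X 1 * X 2 - X 0 * X 3}).colon
        (Ideal.span {((X 3 ^ a - X 0 ^ (a - 1) * X 4) * (X 1 ^ 2 - X 0 * X 2) :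
            MvPolynomial (Fin 5) k)}) ≤
      (Ideal.span {(X 2 ^ 2 - X 1 * X 3 : MvPolynomial (Fin 5) k), X 1 * X 2 - X 0 * X 3}).colon
        (Ideal.span {(X 1 ^ 2 - X 0 * X 2 : MvPolynomial (Fin 5) k)}) := by
  intro r hr
  rw [Ideal.mem_colon_span_singleton] at hr ⊢
  obtain ⟨A, B, hAB⟩ := Ideal.mem_span_pair.1 hr
  have hpr : pr r = 0 := by
    have h2 := congrArg pr hAB
    rw [map_add, map_mul, map_mul, prG0, prG1, mul_zero, mul_zero, add_zero,
      map_mul, map_mul] at h2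
    rcases mul_eq_zero.1 h2.symm with h' | h'
    · exact h'
    · rcases mul_eq_zero.1 h' with h'' | h''
      · exact absurd h'' (prG2ne a ha)
      · exact absurd h'' prG3ne
  exact memX23_mul (mem_X23_of_pr_eq_zero hpr)

lemma hard4 (a : ℕ) (ha : 3 ≤ a) :
    (Ideal.span {(X 2 ^ 2 - X 1 * X 3 : MvPolynomial (Fin 5) k), X 1 * X 2 - X 0 * X 3,
        X 3 ^ a - X 0 ^ (a - 1) * X 4}).colon
        (Ideal.span {((X 1 ^ 2 - X 0 * X 2) * (X 1 ^ 2 - X 0 * X 2) :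
            MvPolynomial (Fin 5) k)}) ≤
      (Ideal.span {(X 2 ^ 2 - X 1 * X 3 : MvPolynomial (Fin 5) k), X 1 * X 2 - X 0 * X 3,
        X 3 ^ a - X 0 ^ (a - 1) * X 4}).colon
        (Ideal.span {(X 1 ^ 2 - X 0 * X 2 : MvPolynomial (Fin 5) k)}) := by
  intro r hr
  rw [Ideal.mem_colon_span_singleton] at hr ⊢
  -- reorder the generating set to extract the coefficient of G2
  have hset : ({X 2 ^ 2 - X 1 * X 3, X 1 * X 2 - X 0 * X 3, X 3 ^ a - X 0 ^ (a - 1) * X 4} :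
      Set (MvPolynomial (Fin 5) k))
      = insert (X 3 ^ a - X 0 ^ (a - 1) * X 4)
          {X 2 ^ 2 - X 1 * X 3, X 1 * X 2 - X 0 * X 3} := by
    ext x; simp; tauto
  rw [hset] at hr ⊢
  obtain ⟨C, z, hz, hEq⟩ := Ideal.mem_span_insert.1 hr
  obtain ⟨A, B, hAB⟩ := Ideal.mem_span_pair.1 hz
  -- apply pr
  have hkey : pr r * X 1 ^ 4 = pr C * -(X 0 ^ (a - 1) * X 4) := by
    have h2 := congrArg pr hEq
    rw [map_mul, map_mul, prG3, map_add, map_mul, prG2 a ha, ← hAB, map_add, map_mul,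
      map_mul, prG0, prG1, mul_zero, mul_zero, add_zero, add_zero] at h2
    rw [show pr r * X 1 ^ 4 = pr r * ((X 1 : MvPolynomial (Fin 5) k) ^ 2 * X 1 ^ 2)
      from by ring, h2]
  have hdvd : (X 0 : MvPolynomial (Fin 5) k) ^ (a - 1) * X 4 ∣ pr r * X 1 ^ 4 :=
    ⟨-pr C, by rw [hkey]; ring⟩
  have hX0 : Prime (X 0 : MvPolynomial (Fin 5) k) := primeX 0
  have hX4 : Prime (X 4 : MvPolynomial (Fin 5) k) := primeX 4
  have hnd0 : ¬ (X 0 : MvPolynomial (Fin 5) k) ∣ X 1 ^ 4 := fun hd =>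
    X_not_dvd_X (by decide) (hX0.dvd_of_dvd_pow hd)
  have hnd4 : ¬ (X 4 : MvPolynomial (Fin 5) k) ∣ X 1 ^ 4 := fun hd =>
    X_not_dvd_X (by decide) (hX4.dvd_of_dvd_pow hd)
  have h4dvd : (X 4 : MvPolynomial (Fin 5) k) ∣ pr r := by
    have h1 : (X 4 : MvPolynomial (Fin 5) k) ∣ pr r * X 1 ^ 4 :=
      dvd_trans (Dvd.intro_left _ rfl) hdvd
    rcases (hX4.2.2 _ _ h1) with h' | h'
    · exact h'
    · exact absurd h' hnd4
  have h0dvd : (X 0 : MvPolynomial (Fin 5) k) ^ (a - 1) ∣ pr r :=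
    hX0.pow_dvd_of_dvd_mul_right (a - 1) hnd0 (dvd_trans ⟨X 4, rfl⟩ hdvd)
  obtain ⟨s, hs⟩ := h0dvd
  have hsdvd : (X 4 : MvPolynomial (Fin 5) k) ∣ s := by
    rw [hs] at h4dvd
    rcases hX4.2.2 _ _ h4dvd with h' | h'
    · exact absurd h' (fun hd => X_not_dvd_X (show (4 : Fin 5) ≠ 0 from by decide)
        (hX4.dvd_of_dvd_pow hd))
    · exact h'
  obtain ⟨t, ht⟩ := hsdvd
  have hprr : pr r = X 0 ^ (a - 1) * (X 4 * t) := by rw [hs, ht]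
  -- memberships
  have hsub : Ideal.span {(X 2 ^ 2 - X 1 * X 3 : MvPolynomial (Fin 5) k),
      X 1 * X 2 - X 0 * X 3} ≤ Ideal.span (insert (X 3 ^ a - X 0 ^ (a - 1) * X 4)
        {(X 2 ^ 2 - X 1 * X 3 : MvPolynomial (Fin 5) k), X 1 * X 2 - X 0 * X 3}) :=
    Ideal.span_mono (Set.subset_insert _ _)
  have hmem1 : (r - pr r) * (X 1 ^ 2 - X 0 * X 2) ∈
      Ideal.span (insert (X 3 ^ a - X 0 ^ (a - 1) * X 4)
        {(X 2 ^ 2 - X 1 * X 3 : MvPolynomial (Fin 5) k), X 1 * X 2 - X 0 * X 3}) :=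
    hsub (memX23_mul (sub_pr_mem r))
  have hpow : (X 3 : MvPolynomial (Fin 5) k) ^ (a - 1) * X 3 = X 3 ^ a := by
    rw [← pow_succ, Nat.sub_add_cancel (by omega)]
  have keyid : (X 0 : MvPolynomial (Fin 5) k) ^ (a - 1) * X 4 * (X 1 ^ 2 - X 0 * X 2)
      = X 3 ^ (a - 1) * (X 3 * (X 1 ^ 2 - X 0 * X 2))
        + (-(X 1 ^ 2 - X 0 * X 2)) * (X 3 ^ a - X 0 ^ (a - 1) * X 4) := by
    rw [show (X 3 : MvPolynomial (Fin 5) k) ^ (a - 1) * (X 3 * (X 1 ^ 2 - X 0 * X 2))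
        = (X 3 ^ (a - 1) * X 3) * (X 1 ^ 2 - X 0 * X 2) from by ring, hpow]
    ring
  have hmem2 : (X 0 : MvPolynomial (Fin 5) k) ^ (a - 1) * X 4 * (X 1 ^ 2 - X 0 * X 2) ∈
      Ideal.span (insert (X 3 ^ a - X 0 ^ (a - 1) * X 4)
        {(X 2 ^ 2 - X 1 * X 3 : MvPolynomial (Fin 5) k), X 1 * X 2 - X 0 * X 3}) := by
    rw [keyid]
    exact Ideal.add_mem _ (Ideal.mul_mem_left _ _ (hsub memB))
      (Ideal.mul_mem_left _ _ (Ideal.subset_span (by simp)))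
  have hfinal : r * (X 1 ^ 2 - X 0 * X 2)
      = (r - pr r) * (X 1 ^ 2 - X 0 * X 2)
        + t * (X 0 ^ (a - 1) * X 4 * (X 1 ^ 2 - X 0 * X 2)) := by
    rw [show (r - pr r) * (X 1 ^ 2 - X 0 * X 2)
        + t * (X 0 ^ (a - 1) * X 4 * (X 1 ^ 2 - X 0 * X 2))
        = r * (X 1 ^ 2 - X 0 * X 2)
          + (X 0 ^ (a - 1) * (X 4 * t) - pr r) * (X 1 ^ 2 - X 0 * X 2) from by ring, ← hprr]
    ring
  rw [hfinal]
  exact Ideal.add_mem _ hmem1 (Ideal.mul_mem_left _ _ hmem2)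

end DSeqAux

open DSeqAux

/-- For `a ≥ 3`, the elements `g₁ = x₂² - x₁x₃`, `g₂ = x₁x₂ - x₀x₃`, `g₃ = x₃ᵃ - x₀^{a-1}x₄`,
`g₄ = x₁² - x₀x₂` form a d-sequence in `k[x₀,...,x₄]`:
for all `0 ≤ i ≤ 3` and `i + 1 ≤ k ≤ 4`, `((g₁,...,g_i) : g_{i+1} g_k) = ((g₁,...,g_i) : g_k)`. -/
theorem g_is_d_sequence {k : Type*} [Field k] (a : ℕ) (ha : 3 ≤ a)
    (g : Fin 4 → MvPolynomial (Fin 5) k)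
    (hg0 : g 0 = X 2 ^ 2 - X 1 * X 3)
    (hg1 : g 1 = X 1 * X 2 - X 0 * X 3)
    (hg2 : g 2 = X 3 ^ a - X 0 ^ (a - 1) * X 4)
    (hg3 : g 3 = X 1 ^ 2 - X 0 * X 2) :
    ∀ i j : Fin 4, i ≤ j →
      (Ideal.span (g '' {l | l < i})).colon (Ideal.span {g i * g j}) =
        (Ideal.span (g '' {l | l < i})).colon (Ideal.span {g j}) := by
  intro i j hij
  have hfin : ∀ m : Fin 4, m = 0 ∨ m = 1 ∨ m = 2 ∨ m = 3 := by decide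
  have s0 : {l : Fin 4 | l < 0} = (∅ : Set (Fin 4)) :=
    Set.eq_empty_iff_forall_notMem.2 (by decide)
  have s1 : {l : Fin 4 | l < 1} = {0} := by
    ext l; simp only [Set.mem_setOf_eq, Set.mem_singleton_iff]; revert l; decide
  have s2 : {l : Fin 4 | l < 2} = {0, 1} := by
    ext l; simp only [Set.mem_setOf_eq, Set.mem_insert_iff, Set.mem_singleton_iff]
    revert l; decide
  have s3 : {l : Fin 4 | l < 3} = {0, 1, 2} := by
    ext l; simp only [Set.mem_setOf_eq, Set.mem_insert_iff, Set.mem_singleton_iff]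
    revert l; decide
  rcases hfin i with rfl | rfl | rfl | rfl <;> rcases hfin j with rfl | rfl | rfl | rfl <;>
    first
      | exact absurd hij (by decide)
      | skip
  · rw [s0, Set.image_empty, Ideal.span_empty, hg0]
    exact hard0 _ _ hG0ne
  · rw [s0, Set.image_empty, Ideal.span_empty, hg0, hg1]
    exact hard0 _ _ hG0ne
  · rw [s0, Set.image_empty, Ideal.span_empty, hg0, hg2]
    exact hard0 _ _ hG0ne
  · rw [s0, Set.image_empty, Ideal.span_empty, hg0, hg3]
    exact hard0 _ _ hG0ne
  · rw [s1, Set.image_singleton, hg0, hg1]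
    exact le_antisymm (hard1 _ psi1G1ne) (colon_easy _ _ _)
  · rw [s1, Set.image_singleton, hg0, hg1, hg2]
    exact le_antisymm (hard1 _ (psi1G2ne a ha)) (colon_easy _ _ _)
  · rw [s1, Set.image_singleton, hg0, hg1, hg3]
    exact le_antisymm (hard1 _ psi1G3ne) (colon_easy _ _ _)
  · rw [s2, Set.image_insert_eq, Set.image_singleton, hg0, hg1, hg2]
    exact le_antisymm (hard2 a ha) (colon_easy _ _ _)
  · rw [s2, Set.image_insert_eq, Set.image_singleton, hg0, hg1, hg2, hg3]
    exact le_antisymm (hard3 a ha) (colon_easy _ _ _)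
  · rw [s3, Set.image_insert_eq, Set.image_insert_eq, Set.image_singleton, hg0, hg1, hg2, hg3]
    exact le_antisymm (hard4 a ha) (colon_easy _ _ _)
end

section
/- Let R = k[x_0,...,x_4] with a ≥ 3 and g_1 = x_2^2 - x_1 x_3, g_2 = x_1 x_2 - x_0 x_3, g_3 = x_3^a - x_0^{a-1} x_4, g_4 = x_1^2 - x_0 x_2. Then x_0 is a nonzerodivisor on R/(g_1,g_2,g_3,g_4) and x_4 is a nonzerodivisor on R/((g_1,g_2,g_3,g_4) + (x_0)). -/
open MvPolynomial

namespace X0X4Aux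

variable {k : Type*} [Field k]

noncomputable def phiMap (a : ℕ) : MvPolynomial (Fin 5) k →ₐ[k] MvPolynomial (Fin 2) k :=
  aeval ![X 0, X 0 * X 1, X 0 * X 1 ^ 2, X 0 * X 1 ^ 3, X 0 * X 1 ^ (3 * a)]

noncomputable def expMap (a : ℕ) (m : Fin 5 →₀ ℕ) : Fin 2 →₀ ℕ :=
  Finsupp.single 0 (m 0 + m 1 + m 2 + m 3 + m 4) +
    Finsupp.single 1 (m 1 + 2 * m 2 + 3 * m 3 + 3 * a * m 4)

lemma phi_monomial (a : ℕ) (m : Fin 5 →₀ ℕ) (c : k) :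
    phiMap a (monomial m c) = monomial (expMap a m) c := by
  have h1 : (phiMap a (monomial m c) : MvPolynomial (Fin 2) k)
      = C c * ∏ i : Fin 5, (![X 0, X 0 * X 1, X 0 * X 1 ^ 2, X 0 * X 1 ^ 3,
          X 0 * X 1 ^ (3 * a)] i : MvPolynomial (Fin 2) k) ^ m i := by
    rw [monomial_eq, Finsupp.prod_fintype _ _ (fun i => pow_zero _)]
    simp [phiMap, map_prod, algebraMap_eq]
  rw [h1, Fin.prod_univ_five]
  simp only [Matrix.cons_val_zero, Matrix.cons_val_one, Matrix.head_cons,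
    Matrix.cons_val_two, Matrix.tail_cons, Matrix.cons_val_three, Matrix.cons_val_four]
  have hX : ∀ w : ℕ, (X 0 * X 1 ^ w : MvPolynomial (Fin 2) k)
      = monomial (Finsupp.single 0 1 + Finsupp.single 1 w) 1 := by
    intro w
    rw [X_pow_eq_monomial, X, monomial_mul, one_mul]
  have hX0 : (X 0 : MvPolynomial (Fin 2) k) = monomial (Finsupp.single 0 1 + Finsupp.single 1 0) 1 := by
    simpa using hX 0
  have hX1 : (X 0 * X 1 : MvPolynomial (Fin 2) k)
      = monomial (Finsupp.single 0 1 + Finsupp.single 1 1) 1 := by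
    simpa using hX 1
  rw [hX (3*a), hX 3, hX 2, hX1, hX0]
  simp only [monomial_pow, monomial_mul, one_pow, one_mul, C_mul_monomial, mul_one]
  congr 2
  ext j
  fin_cases j <;>
    simp [expMap, Finsupp.add_apply, Finsupp.smul_apply, Finsupp.single_apply, smul_eq_mul] <;>
    ring


def NormalM (a : ℕ) (m : Fin 5 →₀ ℕ) : Prop := m 1 + m 2 ≤ 1 ∧ m 3 < a

lemma exp_inj {a : ℕ} (ha : 3 ≤ a) {m m' : Fin 5 →₀ ℕ} (hm : NormalM a m)
    (hm' : NormalM a m') (h : expMap a m = expMap a m') : m = m' := by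
  obtain ⟨h1, h2⟩ := hm
  obtain ⟨h1', h2'⟩ := hm'
  have hd : m 0 + m 1 + m 2 + m 3 + m 4 = m' 0 + m' 1 + m' 2 + m' 3 + m' 4 := by
    have := DFunLike.congr_fun h (0 : Fin 2)
    simpa [expMap, Finsupp.single_apply] using this
  have hT : m 1 + 2 * m 2 + 3 * m 3 + 3 * a * m 4
      = m' 1 + 2 * m' 2 + 3 * m' 3 + 3 * a * m' 4 := by
    have := DFunLike.congr_fun h (1 : Fin 2)
    simpa [expMap, Finsupp.single_apply] using this
  have h4 : m 4 = m' 4 := by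
    rcases lt_trichotomy (m 4) (m' 4) with hlt | heq | hgt
    · exfalso
      have : a * (m 4 + 1) ≤ a * m' 4 := Nat.mul_le_mul_left a (by omega)
      rw [Nat.mul_add, Nat.mul_one] at this
      have e1 : 3 * a * m 4 = 3 * (a * m 4) := by ring
      have e2 : 3 * a * m' 4 = 3 * (a * m' 4) := by ring
      rw [e1, e2] at hT
      generalize a * m 4 = p, a * m' 4 = q at *
      omega
    · exact heq
    · exfalso
      have : a * (m' 4 + 1) ≤ a * m 4 := Nat.mul_le_mul_left a (by omega)
      rw [Nat.mul_add, Nat.mul_one] at this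
      have e1 : 3 * a * m 4 = 3 * (a * m 4) := by ring
      have e2 : 3 * a * m' 4 = 3 * (a * m' 4) := by ring
      rw [e1, e2] at hT
      generalize a * m 4 = p, a * m' 4 = q at *
      omega
  rw [h4] at hT hd
  have h123 : m 1 = m' 1 ∧ m 2 = m' 2 ∧ m 3 = m' 3 := by
    generalize 3 * a * m' 4 = p at hT
    omega
  have h0 : m 0 = m' 0 := by omega
  ext i
  fin_cases i
  · exact h0
  · exact h123.1
  · exact h123.2.1
  · exact h123.2.2
  · exact h4

def normSub (a : ℕ) : Submodule k (MvPolynomial (Fin 5) k) where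
  carrier := {f | ∀ m ∈ f.support, NormalM a m}
  add_mem' := by
    intro f g hf hg m hm
    rcases Finset.mem_union.1 (MvPolynomial.support_add hm) with h | h
    · exact hf m h
    · exact hg m h
  zero_mem' := by intro m hm; simp at hm
  smul_mem' := by
    intro c f hf m hm
    exact hf m (MvPolynomial.support_smul hm)

lemma normal_ker {a : ℕ} (ha : 3 ≤ a) {n : MvPolynomial (Fin 5) k}
    (hn : n ∈ normSub (k := k) a) (h0 : phiMap a n = 0) : n = 0 := by
  suffices h : ∀ m ∈ n.support, coeff m n = 0 by
    ext m
    by_cases hm : m ∈ n.support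
    · simpa using h m hm
    · simpa using MvPolynomial.notMem_support_iff.1 hm
  intro m hm
  have hφ : phiMap a n = ∑ u ∈ n.support, monomial (expMap a u) (coeff u n) := by
    conv_lhs => rw [n.as_sum]
    rw [map_sum]
    exact Finset.sum_congr rfl fun u _ => phi_monomial a u (coeff u n)
  have : coeff (expMap a m) (phiMap a n) = coeff m n := by
    rw [hφ, MvPolynomial.coeff_sum]
    rw [Finset.sum_eq_single m]
    · simp [coeff_monomial]
    · intro u hu hne
      rw [coeff_monomial, if_neg]
      intro he
      exact hne (exp_inj ha (hn u hu) (hn m hm) he)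
    · intro hnot; exact absurd hm hnot
  rw [h0] at this
  simpa using this.symm


def gens (a : ℕ) : Set (MvPolynomial (Fin 5) k) :=
  {X 2 ^ 2 - X 1 * X 3, X 1 * X 2 - X 0 * X 3, X 3 ^ a - X 0 ^ (a - 1) * X 4,
    X 1 ^ 2 - X 0 * X 2}

noncomputable def P (a : ℕ) : Submodule k (MvPolynomial (Fin 5) k) :=
  normSub a ⊔ (Ideal.span (gens a)).restrictScalars k

lemma single_le {m : Fin 5 →₀ ℕ} {i : Fin 5} {c : ℕ} (h : c ≤ m i) :
    Finsupp.single i c ≤ m := by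
  rw [Finsupp.le_def]
  intro t
  rcases eq_or_ne i t with rfl | hne
  · simpa using h
  · simp [Finsupp.single_apply, hne]

lemma pair_le {m : Fin 5 →₀ ℕ} {i j : Fin 5} {c d : ℕ} (hij : i ≠ j)
    (hc : c ≤ m i) (hd : d ≤ m j) : Finsupp.single i c + Finsupp.single j d ≤ m := by
  rw [Finsupp.le_def]
  intro t
  rcases eq_or_ne i t with rfl | hne
  · rw [Finsupp.add_apply, Finsupp.single_eq_same, Finsupp.single_apply,
      if_neg (fun h => hij h.symm)]
    simpa using hc
  · rcases eq_or_ne j t with rfl | hne'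
    · rw [Finsupp.add_apply, Finsupp.single_eq_same, Finsupp.single_apply, if_neg hne]
      simpa using hd
    · simp [Finsupp.single_apply, hne, hne']

lemma XpXq (i j : Fin 5) (c d : ℕ) :
    (X i ^ c * X j ^ d : MvPolynomial (Fin 5) k)
      = monomial (Finsupp.single i c + Finsupp.single j d) 1 := by
  rw [X_pow_eq_monomial, X_pow_eq_monomial, monomial_mul, one_mul]

lemma step {a : ℕ} {g : MvPolynomial (Fin 5) k} (hg : g ∈ gens (k := k) a)
    {u v : Fin 5 →₀ ℕ}
    (huv : (monomial u 1 : MvPolynomial (Fin 5) k) = g + monomial v 1)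
    (r : Fin 5 →₀ ℕ) (hP : (monomial (r + v) 1 : MvPolynomial (Fin 5) k) ∈ P a) :
    (monomial (r + u) 1 : MvPolynomial (Fin 5) k) ∈ P a := by
  have key : (monomial (r + u) 1 : MvPolynomial (Fin 5) k)
      = monomial r 1 * g + monomial (r + v) 1 := by
    have h1 : (monomial (r + u) (1:k)) = monomial r 1 * monomial u 1 := by
      rw [monomial_mul, one_mul]
    have h2 : (monomial (r + v) (1:k)) = monomial r 1 * monomial v 1 := by
      rw [monomial_mul, one_mul]
    rw [h1, h2, huv, mul_add]
  rw [key]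
  refine add_mem (Submodule.mem_sup_right ?_) hP
  exact Ideal.mul_mem_left _ _ (Ideal.subset_span hg)

lemma mem_P {a : ℕ} (ha : 3 ≤ a) (f : MvPolynomial (Fin 5) k) : f ∈ P a := by
  suffices H : ∀ N (m : Fin 5 →₀ ℕ), 2 * m 1 + 2 * m 2 + m 3 ≤ N →
      (monomial m 1 : MvPolynomial (Fin 5) k) ∈ P a by
    rw [f.as_sum]
    refine Submodule.sum_mem _ fun m hm => ?_
    have : (monomial m (coeff m f) : MvPolynomial (Fin 5) k)
        = coeff m f • monomial m 1 := by
      rw [smul_monomial, smul_eq_mul, mul_one]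
    rw [this]
    exact Submodule.smul_mem _ _ (H _ m le_rfl)
  intro N
  induction N using Nat.strong_induction_on with
  | _ N IH =>
  intro m hm
  by_cases hnorm : m 1 + m 2 ≤ 1 ∧ m 3 < a
  · refine Submodule.mem_sup_left ?_
    intro u hu
    rw [Finset.mem_singleton.1 (MvPolynomial.support_monomial_subset hu)]
    exact hnorm
  · have hcases : 2 ≤ m 1 ∨ 2 ≤ m 2 ∨ (1 ≤ m 1 ∧ 1 ≤ m 2) ∨ a ≤ m 3 := by omega
    rcases hcases with h1 | h2 | h12 | h3
    · -- use g₄ = X1² - X0·X2 : u = single 1 2, v = single 0 1 + single 2 1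
      set u : Fin 5 →₀ ℕ := Finsupp.single 1 2 with hu
      set v : Fin 5 →₀ ℕ := Finsupp.single 0 1 + Finsupp.single 2 1 with hv
      have hle : u ≤ m := single_le h1
      have hdecomp : m - u + u = m := tsub_add_cancel_of_le hle
      set r : Fin 5 →₀ ℕ := m - u with hr
      have huv : (monomial u 1 : MvPolynomial (Fin 5) k)
          = (X 1 ^ 2 - X 0 * X 2) + monomial v 1 := by
        rw [← X_pow_eq_monomial, hv, ← XpXq]; ring
      have hmu : 2 * (r + v) 1 + 2 * (r + v) 2 + (r + v) 3 < N := by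
        have e1 : (r + v) 1 = m 1 - 2 := by
          simp [hr, hv, hu, Finsupp.tsub_apply, Finsupp.single_apply]
        have e2 : (r + v) 2 = m 2 + 1 := by
          simp [hr, hv, hu, Finsupp.tsub_apply, Finsupp.single_apply]
        have e3 : (r + v) 3 = m 3 := by
          simp [hr, hv, hu, Finsupp.tsub_apply, Finsupp.single_apply]
        omega
      have hst := step (a := a) (by simp [gens]) huv r
        (IH _ hmu (r + v) le_rfl)
      rwa [hdecomp] at hst
    · -- use g₁ = X2² - X1·X3 : u = single 2 2, v = single 1 1 + single 3 1
      set u : Fin 5 →₀ ℕ := Finsupp.single 2 2 with hu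
      set v : Fin 5 →₀ ℕ := Finsupp.single 1 1 + Finsupp.single 3 1 with hv
      have hle : u ≤ m := single_le h2
      have hdecomp : m - u + u = m := tsub_add_cancel_of_le hle
      set r : Fin 5 →₀ ℕ := m - u with hr
      have huv : (monomial u 1 : MvPolynomial (Fin 5) k)
          = (X 2 ^ 2 - X 1 * X 3) + monomial v 1 := by
        rw [← X_pow_eq_monomial, hv, ← XpXq]; ring
      have hmu : 2 * (r + v) 1 + 2 * (r + v) 2 + (r + v) 3 < N := by
        have e1 : (r + v) 1 = m 1 + 1 := by
          simp [hr, hv, hu, Finsupp.tsub_apply, Finsupp.single_apply]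
        have e2 : (r + v) 2 = m 2 - 2 := by
          simp [hr, hv, hu, Finsupp.tsub_apply, Finsupp.single_apply]
        have e3 : (r + v) 3 = m 3 + 1 := by
          simp [hr, hv, hu, Finsupp.tsub_apply, Finsupp.single_apply]
        omega
      have hst := step (a := a) (by simp [gens]) huv r
        (IH _ hmu (r + v) le_rfl)
      rwa [hdecomp] at hst
    · -- use g₂ = X1·X2 - X0·X3 : u = single 1 1 + single 2 1, v = single 0 1 + single 3 1
      set u : Fin 5 →₀ ℕ := Finsupp.single 1 1 + Finsupp.single 2 1 with hu
      set v : Fin 5 →₀ ℕ := Finsupp.single 0 1 + Finsupp.single 3 1 with hv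
      have hle : u ≤ m := pair_le (by decide) h12.1 h12.2
      have hdecomp : m - u + u = m := tsub_add_cancel_of_le hle
      set r : Fin 5 →₀ ℕ := m - u with hr
      have huv : (monomial u 1 : MvPolynomial (Fin 5) k)
          = (X 1 * X 2 - X 0 * X 3) + monomial v 1 := by
        rw [hu, ← XpXq, hv, ← XpXq]; ring
      have hmu : 2 * (r + v) 1 + 2 * (r + v) 2 + (r + v) 3 < N := by
        have e1 : (r + v) 1 = m 1 - 1 := by
          simp [hr, hv, hu, Finsupp.tsub_apply, Finsupp.single_apply]
        have e2 : (r + v) 2 = m 2 - 1 := by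
          simp [hr, hv, hu, Finsupp.tsub_apply, Finsupp.single_apply]
        have e3 : (r + v) 3 = m 3 + 1 := by
          simp [hr, hv, hu, Finsupp.tsub_apply, Finsupp.single_apply]
        omega
      have hst := step (a := a) (by simp [gens]) huv r
        (IH _ hmu (r + v) le_rfl)
      rwa [hdecomp] at hst
    · -- use g₃ = X3^a - X0^(a-1)·X4 : u = single 3 a, v = single 0 (a-1) + single 4 1
      set u : Fin 5 →₀ ℕ := Finsupp.single 3 a with hu
      set v : Fin 5 →₀ ℕ := Finsupp.single 0 (a - 1) + Finsupp.single 4 1 with hv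
      have hle : u ≤ m := single_le h3
      have hdecomp : m - u + u = m := tsub_add_cancel_of_le hle
      set r : Fin 5 →₀ ℕ := m - u with hr
      have huv : (monomial u 1 : MvPolynomial (Fin 5) k)
          = (X 3 ^ a - X 0 ^ (a - 1) * X 4) + monomial v 1 := by
        have : (X 0 ^ (a-1) * X 4 : MvPolynomial (Fin 5) k)
            = X 0 ^ (a-1) * X 4 ^ 1 := by ring
        rw [← X_pow_eq_monomial, hv, ← XpXq, ← this]; ring
      have hmu : 2 * (r + v) 1 + 2 * (r + v) 2 + (r + v) 3 < N := by
        have e1 : (r + v) 1 = m 1 := by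
          simp [hr, hv, hu, Finsupp.tsub_apply, Finsupp.single_apply]
        have e2 : (r + v) 2 = m 2 := by
          simp [hr, hv, hu, Finsupp.tsub_apply, Finsupp.single_apply]
        have e3 : (r + v) 3 = m 3 - a := by
          simp [hr, hv, hu, Finsupp.tsub_apply, Finsupp.single_apply]
        omega
      have hst := step (a := a) (by simp [gens]) huv r
        (IH _ hmu (r + v) le_rfl)
      rwa [hdecomp] at hst


lemma phi_gens (ha : 1 ≤ a) : ∀ g ∈ gens (k := k) a, phiMap a g = 0 := by
  intro g hg
  have hX : ∀ i : Fin 5, phiMap (k := k) a (X i)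
      = ![X 0, X 0 * X 1, X 0 * X 1 ^ 2, X 0 * X 1 ^ 3, X 0 * X 1 ^ (3 * a)] i :=
    fun i => aeval_X _ i
  simp only [gens, Set.mem_insert_iff, Set.mem_singleton_iff] at hg
  rcases hg with rfl | rfl | rfl | rfl
  · simp only [map_sub, map_mul, map_pow, hX]
    simp only [Matrix.cons_val_zero, Matrix.cons_val_one, Matrix.head_cons,
      Matrix.cons_val_two, Matrix.tail_cons, Matrix.cons_val_three]
    ring
  · simp only [map_sub, map_mul, map_pow, hX]
    simp only [Matrix.cons_val_zero, Matrix.cons_val_one, Matrix.head_cons,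
      Matrix.cons_val_two, Matrix.tail_cons, Matrix.cons_val_three]
    ring
  · simp only [map_sub, map_mul, map_pow, hX]
    simp only [Matrix.cons_val_zero, Matrix.cons_val_one, Matrix.head_cons,
      Matrix.cons_val_three, Matrix.tail_cons, Matrix.cons_val_four]
    have e1 : (X 0 * X 1 ^ 3 : MvPolynomial (Fin 2) k) ^ a
        = X 0 ^ a * X 1 ^ (3 * a) := by rw [mul_pow, ← pow_mul]
    have e2 : (X 0 : MvPolynomial (Fin 2) k) ^ (a - 1) * (X 0 * X 1 ^ (3 * a))
        = X 0 ^ a * X 1 ^ (3 * a) := by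
      rw [← mul_assoc, ← pow_succ]
      have : a - 1 + 1 = a := by omega
      rw [this]
    rw [e1, e2, sub_self]
  · simp only [map_sub, map_mul, map_pow, hX]
    simp only [Matrix.cons_val_zero, Matrix.cons_val_one, Matrix.head_cons,
      Matrix.cons_val_two, Matrix.tail_cons]
    ring

lemma part1 {a : ℕ} (ha : 3 ≤ a) {f : MvPolynomial (Fin 5) k}
    (hf : f * X 0 ∈ Ideal.span (gens (k := k) a)) : f ∈ Ideal.span (gens (k := k) a) := by
  obtain ⟨n, hn, j, hj, hnj⟩ := Submodule.mem_sup.1 (mem_P ha f)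
  have hj' : j ∈ Ideal.span (gens (k := k) a) := hj
  have hnX : n * X 0 ∈ Ideal.span (gens (k := k) a) := by
    have : n * X 0 = f * X 0 - j * X 0 := by rw [← hnj]; ring
    rw [this]
    exact sub_mem hf (Ideal.mul_mem_right _ _ hj')
  have hker : ∀ x ∈ Ideal.span (gens (k := k) a), phiMap a x = 0 := by
    intro x hx
    refine Submodule.span_induction ?_ ?_ ?_ ?_ hx
    · exact fun g hg => phi_gens (by omega) g hg
    · simp
    · intro x y _ _ hx hy; rw [map_add, hx, hy, add_zero]
    · intro c x _ hx; rw [smul_eq_mul, map_mul, hx, mul_zero]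
  have h0 : phiMap a n * phiMap a (X (0 : Fin 5)) = 0 := by
    rw [← map_mul]; exact hker _ hnX
  have hX0 : phiMap (k := k) a (X (0 : Fin 5)) = X 0 := aeval_X _ 0
  rw [hX0] at h0
  have hphin : phiMap a n = 0 := by
    rcases mul_eq_zero.1 h0 with h | h
    · exact h
    · exact absurd h (X_ne_zero 0)
  have hn0 : n = 0 := normal_ker ha hn hphin
  rw [← hnj, hn0, zero_add]
  exact hj'


def gensT (a : ℕ) : Set (MvPolynomial (Fin 5) k) :=
  {X 2 ^ 2 - X 1 * X 3, X 1 * X 2 - X 0 * X 3, X 3 ^ a, X 1 ^ 2 - X 0 * X 2, X 0}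

def gensB (a : ℕ) : Set (MvPolynomial (Fin 4) k) :=
  {X 2 ^ 2 - X 1 * X 3, X 1 * X 2 - X 0 * X 3, X 3 ^ a, X 1 ^ 2 - X 0 * X 2, X 0}

lemma sup_eq {a : ℕ} (ha : 3 ≤ a) :
    Ideal.span (gens (k := k) a) ⊔ Ideal.span {X 0} = Ideal.span (gensT a) := by
  have hpow : (X 0 ^ (a - 1) * X 4 : MvPolynomial (Fin 5) k)
      = X 0 * (X 0 ^ (a - 2) * X 4) := by
    rw [← mul_assoc, ← pow_succ']
    have : a - 2 + 1 = a - 1 := by omega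
    rw [this]
  rw [← Ideal.span_union]
  apply le_antisymm <;> rw [Ideal.span_le] <;> intro g hg
  · simp only [Set.union_singleton, gens, Set.mem_insert_iff, Set.mem_singleton_iff] at hg
    rcases hg with rfl | rfl | rfl | rfl | rfl
    · exact Ideal.subset_span (by simp [gensT])
    · exact Ideal.subset_span (by simp [gensT])
    · exact Ideal.subset_span (by simp [gensT])
    · rw [hpow]
      exact sub_mem (Ideal.subset_span (by simp [gensT]))
        (Ideal.mul_mem_right _ _ (Ideal.subset_span (by simp [gensT])))
    · exact Ideal.subset_span (by simp [gensT])
  · simp only [gensT, Set.mem_insert_iff, Set.mem_singleton_iff] at hg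
    have hx0 : (X 0 : MvPolynomial (Fin 5) k) ∈
        Ideal.span (gens (k := k) a ∪ {X 0}) :=
      Ideal.subset_span (by simp)
    rcases hg with rfl | rfl | rfl | rfl | rfl
    · exact Ideal.subset_span (by simp [gens])
    · exact Ideal.subset_span (by simp [gens])
    · have : (X 3 ^ a : MvPolynomial (Fin 5) k)
          = (X 3 ^ a - X 0 ^ (a - 1) * X 4) + X 0 * (X 0 ^ (a - 2) * X 4) := by
        rw [← hpow]; ring
      rw [this]
      exact add_mem (Ideal.subset_span (by simp [gens]))
        (Ideal.mul_mem_right _ _ hx0)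
    · exact Ideal.subset_span (by simp [gens])
    · exact hx0

noncomputable def Phi2 : MvPolynomial (Fin 5) k ≃ₐ[k] Polynomial (MvPolynomial (Fin 4) k) :=
  (renameEquiv k (finRotate 5)).trans (MvPolynomial.finSuccEquiv k 4)

lemma Phi2_X (i : Fin 4) :
    Phi2 (k := k) (X i.castSucc) = Polynomial.C (X i) := by
  have h : finRotate 5 i.castSucc = i.succ := by revert i; decide
  simp [Phi2, rename_X, h, finSuccEquiv_X_succ]

lemma Phi2_X4 : Phi2 (k := k) (X 4) = Polynomial.X := by
  have h : finRotate 5 (4 : Fin 5) = 0 := by decide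
  simp [Phi2, rename_X, h, finSuccEquiv_X_zero]

lemma Phi2_image {a : ℕ} :
    (Phi2 (k := k)) '' gensT a = Polynomial.C '' gensB a := by
  have e0 : Phi2 (k := k) (X 0) = Polynomial.C (X 0) := Phi2_X 0
  have e1 : Phi2 (k := k) (X 1) = Polynomial.C (X 1) := Phi2_X 1
  have e2 : Phi2 (k := k) (X 2) = Polynomial.C (X 2) := Phi2_X 2
  have e3 : Phi2 (k := k) (X 3) = Polynomial.C (X 3) := Phi2_X 3
  rw [gensT, gensB]
  simp only [Set.image_insert_eq, Set.image_singleton, map_sub, map_mul, map_pow,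
    e0, e1, e2, e3]

lemma X_cancel {B : Type*} [CommRing B] {p : Polynomial B}
    (h : p * Polynomial.X = 0) : p = 0 := by
  ext n
  have := congrArg (fun q => Polynomial.coeff q (n + 1)) h
  simpa [Polynomial.coeff_mul_X] using this

set_option maxHeartbeats 1000000 in
lemma part2 {a : ℕ} :
    Ideal.Quotient.mk (Ideal.span (gensT (k := k) a)) (X 4) ∈
      nonZeroDivisors (MvPolynomial (Fin 5) k ⧸ Ideal.span (gensT (k := k) a)) := by
  have hmap : Ideal.map
      ((Phi2 (k := k)).toRingEquiv : MvPolynomial (Fin 5) k →+* Polynomial (MvPolynomial (Fin 4) k))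
      (Ideal.span (gensT a)) = Ideal.map Polynomial.C (Ideal.span (gensB a)) := by
    rw [Ideal.map_span, Ideal.map_span]
    congr 1
    exact Phi2_image
  set e2 := Ideal.polynomialQuotientEquivQuotientPolynomial (Ideal.span (gensB (k := k) a))
    with he2
  rw [mem_nonZeroDivisors_iff_right]
  intro z hz
  obtain ⟨f, rfl⟩ := Ideal.Quotient.mk_surjective z
  rw [← map_mul] at hz
  have h1 : Ideal.Quotient.mk (Ideal.map Polynomial.C (Ideal.span (gensB (k := k) a)))
      (Phi2 (f * X 4)) = 0 := by
    have := congrArg (Ideal.quotientEquiv (Ideal.span (gensT (k := k) a))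
      (Ideal.map Polynomial.C (Ideal.span (gensB (k := k) a)))
      (Phi2 (k := k)).toRingEquiv hmap.symm) hz
    rwa [Ideal.quotientEquiv_mk, map_zero] at this
  have h2 : (Phi2 (f * X 4)).map
      (Ideal.Quotient.mk (Ideal.span (gensB (k := k) a))) = 0 := by
    have := congrArg e2.symm h1
    rwa [Ideal.polynomialQuotientEquivQuotientPolynomial_symm_mk, map_zero] at this
  rw [map_mul, Phi2_X4, Polynomial.map_mul, Polynomial.map_X] at h2
  have h3 : (Phi2 f).map (Ideal.Quotient.mk (Ideal.span (gensB (k := k) a))) = 0 :=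
    X_cancel h2
  have h4 : Ideal.Quotient.mk (Ideal.map Polynomial.C (Ideal.span (gensB (k := k) a)))
      (Phi2 f) = 0 := by
    have := congrArg e2 h3
    rwa [Ideal.polynomialQuotientEquivQuotientPolynomial_map_mk, map_zero] at this
  refine (Ideal.quotientEquiv (Ideal.span (gensT (k := k) a))
    (Ideal.map Polynomial.C (Ideal.span (gensB (k := k) a)))
    (Phi2 (k := k)).toRingEquiv hmap.symm).injective ?_
  rw [Ideal.quotientEquiv_mk, map_zero]
  exact h4

end X0X4Aux

open X0X4Aux in
/-- For `a ≥ 3` and `J = (g₁,g₂,g₃,g₄)` in `R = k[x₀,...,x₄]`, `x₀` is a nonzerodivisor on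
`R/J` and `x₄` is a nonzerodivisor on `R/(J + (x₀))`. -/
theorem x0_x4_nonzerodivisors {k : Type*} [Field k] (a : ℕ) (ha : 3 ≤ a)
    (J : Ideal (MvPolynomial (Fin 5) k))
    (hJ : J = Ideal.span {(X 2 : MvPolynomial (Fin 5) k) ^ 2 - X 1 * X 3,
        X 1 * X 2 - X 0 * X 3, X 3 ^ a - X 0 ^ (a - 1) * X 4, X 1 ^ 2 - X 0 * X 2}) :
    Ideal.Quotient.mk J (X 0) ∈ nonZeroDivisors (MvPolynomial (Fin 5) k ⧸ J) ∧
      Ideal.Quotient.mk (J ⊔ Ideal.span {(X 0 : MvPolynomial (Fin 5) k)}) (X 4) ∈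
        nonZeroDivisors (MvPolynomial (Fin 5) k ⧸
          (J ⊔ Ideal.span {(X 0 : MvPolynomial (Fin 5) k)})) := by
  have hJ' : J = Ideal.span (gens (k := k) a) := hJ
  subst hJ'
  constructor
  · rw [mem_nonZeroDivisors_iff_right]
    intro z hz
    obtain ⟨f, rfl⟩ := Ideal.Quotient.mk_surjective z
    rw [← map_mul, Ideal.Quotient.eq_zero_iff_mem] at hz
    rw [Ideal.Quotient.eq_zero_iff_mem]
    exact part1 ha hz
  · rw [sup_eq ha]
    exact part2
end
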